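/- arXiv:2501.12027 — 5 statements merged into one kernel-verified Lean document; each statement's English description precedes it below -/
import Mathlib

section
/- Let n be a positive integer and let u, η be real numbers satisfying u² - η² = (2/((n+1)(n+2)))(u^{n+2} - η^{n+2}), with u ≠ η and u ≠ -η. Then (Σ_{k=1}^{n} k u^{n-k} η^{k-1})(u^{n+1}/(n+1) - u) + (Σ_{k=1}^{n} k η^{n-k} u^{k-1})(η^{n+1}/(n+1) - η) = (n/((n+1)(n+2))) Σ_{k=0}^{⌊(n-1)/2⌋} (u^{n-2k} - η^{n-2k})² (uη)^{2k}. -/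
private lemma geom_aux (x y : ℝ) (m : ℕ) :
    (∑ i ∈ Finset.range (m+1), x^(m-i) * y^i) * (x - y) = x^(m+1) - y^(m+1) := by
  induction m with
  | zero => simp
  | succ m ih =>
    rw [Finset.sum_range_succ]
    have h1 : ∑ i ∈ Finset.range (m+1), x^(m+1-i) * y^i
        = x * ∑ i ∈ Finset.range (m+1), x^(m-i) * y^i := by
      rw [Finset.mul_sum]
      refine Finset.sum_congr rfl fun i hi => ?_
      rw [Finset.mem_range] at hi
      rw [show m+1-i = (m-i)+1 from by omega, pow_succ]
      ring
    rw [h1, show m+1-(m+1) = 0 from by omega, pow_zero, one_mul]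
    linear_combination x * ih

private lemma A_aux (x y : ℝ) (m : ℕ) :
    (∑ k ∈ Finset.Icc 1 m, (k : ℝ) * x^(m-k) * y^(k-1)) * (x - y)
      = (∑ i ∈ Finset.range (m+1), x^(m-i) * y^i) - ((m : ℝ)+1) * y^m := by
  induction m with
  | zero => simp
  | succ m ih =>
    rw [Finset.sum_Icc_succ_top (by omega : 1 ≤ m+1)]
    have h1 : ∑ k ∈ Finset.Icc 1 m, (k : ℝ) * x^(m+1-k) * y^(k-1)
        = x * ∑ k ∈ Finset.Icc 1 m, (k : ℝ) * x^(m-k) * y^(k-1) := by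
      rw [Finset.mul_sum]
      refine Finset.sum_congr rfl fun k hk => ?_
      rw [Finset.mem_Icc] at hk
      rw [show m+1-k = (m-k)+1 from by omega, pow_succ]
      ring
    rw [h1]
    have h2 : ∑ i ∈ Finset.range (m+1+1), x^(m+1-i) * y^i
        = (∑ i ∈ Finset.range (m+1), x^(m-i) * y^i) * y + x^(m+1) := by
      rw [Finset.sum_range_succ']
      simp only [pow_zero, mul_one, Nat.sub_zero]
      congr 1
      rw [Finset.sum_mul]
      refine Finset.sum_congr rfl fun i hi => ?_
      rw [Finset.mem_range] at hi
      rw [show m+1-(i+1) = m-i from by omega, pow_succ]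
      ring
    rw [h2, show m+1-(m+1) = 0 from by omega, show m+1-1 = m from by omega, pow_zero]
    push_cast
    linear_combination x * ih + geom_aux x y m

private lemma S_aux (x y : ℝ) : ∀ n : ℕ, 0 < n →
    (∑ k ∈ Finset.range ((n-1)/2+1), (x^(n-2*k) - y^(n-2*k))^2 * (x*y)^(2*k))
      = (∑ i ∈ Finset.range (n+1), (x^2)^(n-i) * (y^2)^i) - ((n : ℝ)+1) * (x*y)^n
  | 0, h => absurd h (by omega)
  | 1, _ => by
    norm_num [Finset.sum_range_succ]
    ring
  | 2, _ => by
    norm_num [Finset.sum_range_succ]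
    ring
  | (n+3), _ => by
    have ih := S_aux x y (n+1) (by omega)
    rw [show (n+3-1)/2+1 = ((n+1-1)/2+1)+1 from by omega, Finset.sum_range_succ']
    have h1 : ∀ i ∈ Finset.range ((n+1-1)/2+1),
        (x^(n+3-2*(i+1)) - y^(n+3-2*(i+1)))^2 * (x*y)^(2*(i+1))
          = (x*y)^2 * ((x^(n+1-2*i) - y^(n+1-2*i))^2 * (x*y)^(2*i)) := by
      intro i hi
      rw [Finset.mem_range] at hi
      rw [show n+3-2*(i+1) = n+1-2*i from by omega, show 2*(i+1) = 2*i+2 from by omega,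
        pow_add]
      ring
    have h2 : ∀ i ∈ Finset.range (n+2),
        (x^2)^(n+3-(i+1)) * (y^2)^(i+1) = (x^2*y^2) * ((x^2)^(n+1-i) * (y^2)^i) := by
      intro i hi
      rw [Finset.mem_range] at hi
      rw [show n+3-(i+1) = (n+1-i)+1 from by omega, pow_succ]
      ring
    have hRHS : ∑ i ∈ Finset.range (n+3+1), (x^2)^(n+3-i) * (y^2)^i
        = x^2*y^2 * (∑ i ∈ Finset.range (n+1+1), (x^2)^(n+1-i) * (y^2)^i)
          + (x^2)^(n+3) + (y^2)^(n+3) := by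
      rw [Finset.sum_range_succ, Finset.sum_range_succ', Finset.sum_congr rfl h2,
        ← Finset.mul_sum, show n+3-(n+3) = 0 from by omega, show n+3-0 = n+3 from by omega]
      ring
    rw [Finset.sum_congr rfl h1, ← Finset.mul_sum, ih, hRHS,
      show n+3-2*0 = n+3 from by omega]
    push_cast
    ring

/-- The algebraic identity of Lemma 4.1: if
`u² - η² = (2/((n+1)(n+2)))(u^(n+2) - η^(n+2))` with `u ≠ η`, `u ≠ -η`, then
`(∑_{k=1}^n k u^(n-k) η^(k-1))(u^(n+1)/(n+1) - u)
  + (∑_{k=1}^n k η^(n-k) u^(k-1))(η^(n+1)/(n+1) - η)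
  = (n/((n+1)(n+2))) ∑_{k=0}^{⌊(n-1)/2⌋} (u^(n-2k) - η^(n-2k))² (uη)^(2k)`. -/
theorem abelian_identity (n : ℕ) (hn : 0 < n) (u η : ℝ)
    (hcon : u ^ 2 - η ^ 2 =
      (2 / (((n : ℝ) + 1) * ((n : ℝ) + 2))) * (u ^ (n + 2) - η ^ (n + 2)))
    (hne : u ≠ η) (hne' : u ≠ -η) :
    (∑ k ∈ Finset.Icc 1 n, (k : ℝ) * u ^ (n - k) * η ^ (k - 1)) *
        (u ^ (n + 1) / ((n : ℝ) + 1) - u) +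
      (∑ k ∈ Finset.Icc 1 n, (k : ℝ) * η ^ (n - k) * u ^ (k - 1)) *
        (η ^ (n + 1) / ((n : ℝ) + 1) - η) =
      ((n : ℝ) / (((n : ℝ) + 1) * ((n : ℝ) + 2))) *
        ∑ k ∈ Finset.range ((n - 1) / 2 + 1),
          (u ^ (n - 2 * k) - η ^ (n - 2 * k)) ^ 2 * (u * η) ^ (2 * k) := by
  have hd : u - η ≠ 0 := sub_ne_zero.mpr hne
  have hs : u + η ≠ 0 := by
    intro h
    exact hne' (by linarith)
  have hN1 : (n : ℝ) + 1 ≠ 0 := by positivity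
  have hN2 : (n : ℝ) + 2 ≠ 0 := by positivity
  have hA := A_aux u η n
  have hB := A_aux η u n
  have hgg : ∑ i ∈ Finset.range (n+1), η^(n-i) * u^i
      = ∑ i ∈ Finset.range (n+1), u^(n-i) * η^i := by
    rw [← Finset.sum_range_reflect]
    refine Finset.sum_congr rfl fun i hi => ?_
    rw [Finset.mem_range] at hi
    rw [show n+1-1-i = n-i from by omega, show n-(n-i) = i from by omega]
    ring
  rw [hgg] at hB
  have hg := geom_aux u η n
  have hG := geom_aux (u^2) (η^2) n
  have hS := S_aux u η n hn
  set N : ℝ := (n : ℝ) with hNdef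
  set A := ∑ k ∈ Finset.Icc 1 n, (k : ℝ) * u^(n-k) * η^(k-1) with hAdef
  set B := ∑ k ∈ Finset.Icc 1 n, (k : ℝ) * η^(n-k) * u^(k-1) with hBdef
  set S := ∑ k ∈ Finset.range ((n-1)/2+1), (u^(n-2*k) - η^(n-2*k))^2 * (u*η)^(2*k) with hSdef
  set g := ∑ i ∈ Finset.range (n+1), u^(n-i) * η^i with hgdef
  set G := ∑ i ∈ Finset.range (n+1), (u^2)^(n-i) * (η^2)^i with hGdef
  have hcon'' : (u-η)*(u+η)*((N+1)*(N+2)) = 2*(u^2*u^n - η^2*η^n) := by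
    rw [div_mul_eq_mul_div, eq_div_iff (mul_ne_zero hN1 hN2)] at hcon
    linear_combination hcon
  have key : ((A*(u*u^n - (N+1)*u) + B*(η*η^n - (N+1)*η))*(N+2)) * ((u-η)*((u-η)*(u+η)))
      = (N*S) * ((u-η)*((u-η)*(u+η))) := by
    linear_combination
      ((u*u^n - (N+1)*u)*(N+2)*(u+η)*(u-η)) * hA
      - ((N+2)*(u+η)*(η*η^n - (N+1)*η)*(u-η)) * hB
      - (N*(u-η)*(u+η)*(u-η)) * hS
      - (N*(u-η)) * hG
      + ((N+1)*(N+2)*(η^2-u^2) + (N+2)*(u+η)*(u*u^n - η*η^n)) * hg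
      + ((u+η)*(η^n - u^n) + N*(u*η^n - η*u^n)) * hcon''
  have key2 : (A*(u*u^n - (N+1)*u) + B*(η*η^n - (N+1)*η))*(N+2) = N*S :=
    mul_right_cancel₀ (mul_ne_zero hd (mul_ne_zero hd hs)) key
  have hsplit : A * (u^(n+1)/(N+1) - u) + B * (η^(n+1)/(N+1) - η)
      = (A*(u*u^n - (N+1)*u) + B*(η*η^n - (N+1)*η))/(N+1) := by
    rw [pow_succ, pow_succ]
    field_simp
  rw [hsplit, show N/((N+1)*(N+2))*S = (N*S)/((N+1)*(N+2)) from by ring,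
    div_eq_div_iff hN1 (mul_ne_zero hN1 hN2)]
  linear_combination (N+1) * key2
end

section
/- Let n be a positive integer, W(u) = u²/2 - u^{n+2}/((n+1)(n+2)), d_n = n(n+1)^{2/n}/(2(n+2)). For h ∈ (0, d_n) let α(h) be the unique root of W(u) = h in (0, (n+1)^{1/n}) and β(h) the unique root of W(u) = h in (-(n+1)^{1/n}, 0) if n is even (in (n_*, 0) if n is odd, where n_* < 0 is the unique negative number with W(n_*) = d_n), and define B̃_n(h) = (∫_{β(h)}^{α(h)} uⁿ √(2(h - W(u))) du)/(∫_{β(h)}^{α(h)} √(2(h - W(u))) du). For u ∈ (0, (n+1)^{1/n}) let η(u) be the unique number with W(η(u)) = W(u) in the same negative interval as β. If the function T_n(u) = Σ_{k=0}^{n} u^{n-k} η(u)^{k} is strictly increasing on (0, (n+1)^{1/n}), then B̃_n is strictly increasing on (0, d_n). -/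
open Set MeasureTheory intervalIntegral

noncomputable def Wf (n : ℕ) (u : ℝ) : ℝ :=
  u ^ 2 / 2 - u ^ (n + 2) / (((n : ℝ) + 1) * ((n : ℝ) + 2))

lemma hasDerivAt_Wf (n : ℕ) (u : ℝ) :
    HasDerivAt (Wf n) (u * (1 - u ^ n / ((n : ℝ) + 1))) u := by
  have h1 : HasDerivAt (fun u : ℝ => u ^ 2 / 2) u u := by
    simpa using (hasDerivAt_pow 2 u).div_const 2
  have h2 : HasDerivAt (fun u : ℝ => u ^ (n + 2) / (((n : ℝ) + 1) * ((n : ℝ) + 2)))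
      (((n : ℝ) + 2) * u ^ (n + 1) / (((n : ℝ) + 1) * ((n : ℝ) + 2))) u := by
    simpa using (hasDerivAt_pow (n + 2) u).div_const (((n : ℝ) + 1) * ((n : ℝ) + 2))
  have := h1.sub h2
  refine this.congr_deriv ?_
  have hn1 : ((n : ℝ) + 1) ≠ 0 := by positivity
  have hn2 : ((n : ℝ) + 2) ≠ 0 := by positivity
  field_simp
  ring

section Mono

variable {n : ℕ} {r : ℝ}

lemma Wf_deriv_pos (hn : n ≠ 0) (hr0 : 0 < r) (hr : r ^ n = (n : ℝ) + 1)
    (u : ℝ) (hu : u ∈ Set.Ioo 0 r) :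
    0 < u * (1 - u ^ n / ((n : ℝ) + 1)) := by
  have hun : u ^ n < (n : ℝ) + 1 := by
    calc u ^ n < r ^ n := pow_lt_pow_left₀ hu.2 hu.1.le hn
      _ = (n : ℝ) + 1 := hr
  have : 0 < 1 - u ^ n / ((n : ℝ) + 1) := by
    rw [sub_pos, div_lt_one (by positivity)]; exact hun
  exact mul_pos hu.1 this

lemma Wf_deriv_neg (hn : n ≠ 0) (hr0 : 0 < r) (hr : r ^ n = (n : ℝ) + 1)
    (u : ℝ) (hu : u ∈ Set.Ioo (-r) 0) :
    u * (1 - u ^ n / ((n : ℝ) + 1)) < 0 := by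
  have hun : u ^ n < (n : ℝ) + 1 := by
    calc u ^ n ≤ |u| ^ n := by
          rw [← abs_pow]; exact le_abs_self _
      _ < r ^ n := by
          apply pow_lt_pow_left₀ _ (abs_nonneg u) hn
          rw [abs_lt]; exact ⟨hu.1, hu.2.trans hr0⟩
      _ = (n : ℝ) + 1 := hr
  have h2 : 0 < 1 - u ^ n / ((n : ℝ) + 1) := by
    rw [sub_pos, div_lt_one (by positivity)]; exact hun
  exact mul_neg_of_neg_of_pos hu.2 h2

lemma Wf_deriv_neg_odd (hodd : Odd n) (u : ℝ) (hu : u < 0) :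
    u * (1 - u ^ n / ((n : ℝ) + 1)) < 0 := by
  have hun : u ^ n < 0 := hodd.pow_neg hu
  have h2 : 0 < 1 - u ^ n / ((n : ℝ) + 1) := by
    have : u ^ n / ((n : ℝ) + 1) < 0 := div_neg_of_neg_of_pos hun (by positivity)
    linarith
  exact mul_neg_of_neg_of_pos hu h2

lemma Wf_continuous (n : ℕ) : Continuous (Wf n) := by
  unfold Wf; fun_prop

lemma Wf_strictMonoOn (hn : n ≠ 0) (hr0 : 0 < r) (hr : r ^ n = (n : ℝ) + 1) :
    StrictMonoOn (Wf n) (Set.Icc 0 r) := by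
  apply strictMonoOn_of_deriv_pos (convex_Icc 0 r) (Wf_continuous n).continuousOn
  intro x hx
  rw [interior_Icc] at hx
  rw [(hasDerivAt_Wf n x).deriv]
  exact Wf_deriv_pos hn hr0 hr x hx

lemma Wf_strictAntiOn (hn : n ≠ 0) (hr0 : 0 < r) (hr : r ^ n = (n : ℝ) + 1) :
    StrictAntiOn (Wf n) (Set.Icc (-r) 0) := by
  apply strictAntiOn_of_deriv_neg (convex_Icc (-r) 0) (Wf_continuous n).continuousOn
  intro x hx
  rw [interior_Icc] at hx
  rw [(hasDerivAt_Wf n x).deriv]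
  exact Wf_deriv_neg hn hr0 hr x hx

lemma Wf_strictAntiOn_odd (hodd : Odd n) : StrictAntiOn (Wf n) (Set.Iic 0) := by
  apply strictAntiOn_of_deriv_neg (convex_Iic 0) (Wf_continuous n).continuousOn
  intro x hx
  rw [interior_Iic] at hx
  rw [(hasDerivAt_Wf n x).deriv]
  exact Wf_deriv_neg_odd hodd x hx

lemma Wf_zero (n : ℕ) : Wf n 0 = 0 := by simp [Wf]

lemma Wf_r (hn : n ≠ 0) (hr : r ^ n = (n : ℝ) + 1) :
    Wf n r = r ^ 2 * n / (2 * ((n : ℝ) + 2)) := by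
  have h1 : ((n : ℝ) + 1) ≠ 0 := by positivity
  have h2 : ((n : ℝ) + 2) ≠ 0 := by positivity
  have : r ^ (n + 2) = ((n : ℝ) + 1) * r ^ 2 := by
    rw [pow_add, hr]
  rw [Wf, this]
  field_simp
  ring

end Mono

section Kernel

noncomputable def Kf (h e : ℝ) : ℝ := (Real.sqrt (2 * (h - e)))⁻¹

lemma Kf_nonneg (h e : ℝ) : 0 ≤ Kf h e := by
  unfold Kf; positivity

lemma Kf_pos {h e : ℝ} (he : e < h) : 0 < Kf h e := by
  unfold Kf
  have : 0 < 2 * (h - e) := by linarith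
  positivity

lemma Kf_eq_zero {h e : ℝ} (he : h ≤ e) : Kf h e = 0 := by
  unfold Kf
  rw [show Real.sqrt (2 * (h - e)) = 0 from Real.sqrt_eq_zero'.mpr (by linarith)]
  simp

lemma Kf_measurable (h : ℝ) : Measurable (Kf h) := by
  unfold Kf
  exact ((Real.continuous_sqrt.comp (by continuity)).measurable).inv

lemma Kf_eq_rpow {h e : ℝ} (he : e ≤ h) :
    Kf h e = (Real.sqrt 2)⁻¹ * (h - e) ^ (-(1/2) : ℝ) := by
  unfold Kf
  rcases eq_or_lt_of_le he with heq | hlt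
  · rw [← heq]
    simp only [sub_self, mul_zero, Real.sqrt_zero, inv_zero]
    rw [Real.zero_rpow (by norm_num)]
    simp
  · have h0 : (0:ℝ) < h - e := by linarith
    rw [Real.sqrt_mul (by norm_num) (h - e)]
    rw [mul_inv]
    congr 1
    rw [Real.sqrt_eq_rpow, Real.rpow_neg h0.le]

lemma intervalIntegrable_Kf (h a b : ℝ) : IntervalIntegrable (Kf h) volume a b := by
  have base : ∀ c ≤ h, IntervalIntegrable (Kf h) volume c h := by
    intro c hc
    have hrpow : IntervalIntegrable (fun e => (Real.sqrt 2)⁻¹ * (h - e) ^ (-(1/2) : ℝ))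
        volume c h := by
      have h1 : IntervalIntegrable (fun x : ℝ => x ^ (-(1/2) : ℝ)) volume (h - h) (h - c) :=
        intervalIntegral.intervalIntegrable_rpow' (by norm_num)
      have h2 := (h1.comp_sub_left h)
      simp only [sub_sub_cancel] at h2
      exact (h2.symm).const_mul _
    apply hrpow.congr_ae
    rw [Filter.EventuallyEq]
    filter_upwards [ae_restrict_mem measurableSet_uIoc] with x hx
    have : x ≤ h := by
      rcases hx with hx
      rw [Set.uIoc_of_le hc] at hx
      exact hx.2
    exact (Kf_eq_rpow this).symm
  have upper : ∀ c, h ≤ c → IntervalIntegrable (Kf h) volume h c := by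
    intro c hc
    apply IntervalIntegrable.congr_ae (_root_.intervalIntegrable_const (c := (0:ℝ)))
    rw [Filter.EventuallyEq]
    filter_upwards [ae_restrict_mem measurableSet_uIoc] with x hx
    rw [Set.uIoc_of_le hc] at hx
    exact (Kf_eq_zero hx.1.le).symm
  have seg : ∀ c, IntervalIntegrable (Kf h) volume c h := by
    intro c
    rcases le_total c h with hc | hc
    · exact base c hc
    · exact (upper c hc).symm
  exact (seg a).trans (seg b).symm

lemma integral_Kf {h w : ℝ} (hw : w ≤ h) :
    ∫ e in w..h, Kf h e = Real.sqrt (2 * (h - w)) := by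
  have hcont : ContinuousOn (fun e : ℝ => -Real.sqrt (2 * (h - e))) (Set.Icc w h) :=
    ((Real.continuous_sqrt.comp (by continuity)).neg).continuousOn
  have hderiv : ∀ x ∈ Set.Ioo w h,
      HasDerivWithinAt (fun e : ℝ => -Real.sqrt (2 * (h - e))) (Kf h x) (Set.Ioi x) x := by
    intro x hx
    have hpos : 0 < 2 * (h - x) := by
      have := hx.2; linarith
    have hs : HasDerivAt Real.sqrt (1 / (2 * Real.sqrt (2 * (h - x)))) (2 * (h - x)) :=
      Real.hasDerivAt_sqrt hpos.ne'
    have hinner : HasDerivAt (fun e : ℝ => 2 * (h - e)) (-2) x := by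
      simpa using ((hasDerivAt_id x).const_sub h).const_mul 2
    have := (hs.comp x hinner).neg
    have heq : -(1 / (2 * Real.sqrt (2 * (h - x))) * (-2)) = Kf h x := by
      unfold Kf
      have : Real.sqrt (2 * (h - x)) ≠ 0 := by positivity
      field_simp
    rw [heq] at this
    exact this.hasDerivWithinAt
  have := intervalIntegral.integral_eq_sub_of_hasDeriv_right_of_le hw hcont hderiv
    (intervalIntegrable_Kf h w h)
  rw [this]
  simp

end Kernel

section KeyRepr

variable {n k : ℕ} {r d : ℝ} {α β : ℝ → ℝ}

lemma key_repr (hn : n ≠ 0) (hr0 : 0 < r) (hrn : r ^ n = (n : ℝ) + 1)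
    (hαd : ∀ e ∈ Set.Ioo (0:ℝ) d, α e ∈ Set.Ioo 0 r ∧ Wf n (α e) = e)
    (hβd : ∀ e ∈ Set.Ioo (0:ℝ) d, β e ∈ Set.Ioo (-r) 0 ∧ Wf n (β e) = e)
    {h : ℝ} (hh : h ∈ Set.Ioo (0:ℝ) d) (k : ℕ) :
    ∫ u in (β h)..(α h), u ^ k * Real.sqrt (2 * (h - Wf n u))
      = ∫ e in (0:ℝ)..h, Kf h e * (((α e) ^ (k+1) - (β e) ^ (k+1)) / ((k:ℝ)+1)) := by
  obtain ⟨ha, hWa⟩ := hαd h hh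
  obtain ⟨hb, hWb⟩ := hβd h hh
  set a := α h with ha_def
  set b := β h with hb_def
  have Wmono := Wf_strictMonoOn hn hr0 hrn
  have Wanti := Wf_strictAntiOn hn hr0 hrn
  have hba : b < a := hb.2.trans ha.1
  -- basic bounds
  have haIcc : a ∈ Set.Icc (0:ℝ) r := ⟨ha.1.le, ha.2.le⟩
  have hbIcc : b ∈ Set.Icc (-r) (0:ℝ) := ⟨hb.1.le, hb.2.le⟩
  have hIccPos : ∀ u ∈ Set.Icc b a, 0 ≤ u → u ∈ Set.Icc (0:ℝ) r :=
    fun u hu h0 => ⟨h0, hu.2.trans ha.2.le⟩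
  have hIccNeg : ∀ u ∈ Set.Icc b a, u ≤ 0 → u ∈ Set.Icc (-r) (0:ℝ) :=
    fun u hu h0 => ⟨hb.1.le.trans hu.1, h0⟩
  have Wub : ∀ u ∈ Set.Icc b a, Wf n u ≤ h := by
    intro u hu
    rcases le_total u 0 with h0 | h0
    · have := Wanti.antitoneOn hbIcc (hIccNeg u hu h0) hu.1
      rwa [hWb] at this
    · have := Wmono.monotoneOn (hIccPos u hu h0) haIcc hu.2
      rwa [hWa] at this
  have Wnonneg : ∀ u ∈ Set.Icc b a, 0 ≤ Wf n u := by
    intro u hu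
    rcases le_total u 0 with h0 | h0
    · have := Wanti.antitoneOn (hIccNeg u hu h0) ⟨neg_nonpos_of_nonneg hr0.le, le_refl 0⟩ h0
      rwa [Wf_zero] at this
    · have := Wmono.monotoneOn ⟨le_refl 0, hr0.le⟩ (hIccPos u hu h0) h0
      rwa [Wf_zero] at this
  -- the section identity
  have hsec : ∀ e ∈ Set.Ioc (0:ℝ) h,
      {u : ℝ | u ∈ Set.Ioc b a ∧ Wf n u < e} = Set.Ioo (β e) (α e) := by
    intro e he
    have heIoo : e ∈ Set.Ioo (0:ℝ) d := ⟨he.1, lt_of_le_of_lt he.2 hh.2⟩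
    obtain ⟨hae, hWae⟩ := hαd e heIoo
    obtain ⟨hbe, hWbe⟩ := hβd e heIoo
    ext u
    simp only [Set.mem_setOf_eq, Set.mem_Ioc, Set.mem_Ioo]
    constructor
    · rintro ⟨⟨hbu, hua⟩, hWu⟩
      rcases le_total u 0 with h0 | h0
      · constructor
        · by_contra hle
          push_neg at hle
          have := Wanti.antitoneOn ⟨hb.1.le.trans hbu.le, h0⟩ ⟨hbe.1.le, hbe.2.le⟩ hle
          rw [hWbe] at this
          linarith
        · exact lt_of_le_of_lt h0 hae.1
      · refine ⟨lt_of_lt_of_le hbe.2 h0, ?_⟩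
        by_contra hle
        push_neg at hle
        have := Wmono.monotoneOn ⟨hae.1.le, hae.2.le⟩ ⟨h0, hua.trans ha.2.le⟩ hle
        rw [hWae] at this
        linarith
    · rintro ⟨hbu, hua⟩
      have hWlt : Wf n u < e := by
        rcases le_total u 0 with h0 | h0
        · have := Wanti ⟨hbe.1.le, hbe.2.le⟩ ⟨hbe.1.le.trans hbu.le, h0⟩ hbu
          rwa [hWbe] at this
        · have := Wmono ⟨h0, hua.le.trans hae.2.le⟩ ⟨hae.1.le, hae.2.le⟩ hua
          rwa [hWae] at this
      refine ⟨⟨?_, ?_⟩, hWlt⟩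
      · rcases le_total u 0 with h0 | h0
        · by_contra hle
          push_neg at hle
          have := Wanti.antitoneOn ⟨(hbe.1.trans hbu).le, h0⟩ hbIcc hle
          rw [hWb] at this
          linarith [he.2]
        · exact lt_of_lt_of_le hb.2 h0
      · rcases le_total u 0 with h0 | h0
        · exact h0.trans ha.1.le
        · by_contra hle
          push_neg at hle
          have := Wmono.monotoneOn haIcc ⟨h0, hua.le.trans hae.2.le⟩ hle.le
          rw [hWa] at this
          linarith [he.2]
  -- the product-set machinery
  set S : Set (ℝ × ℝ) := {p | p.1 ∈ Set.Ioc b a ∧ Wf n p.1 < p.2 ∧ p.2 ≤ h} with hS_def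
  have hSmeas : MeasurableSet S := by
    have : S = ((Set.Ioc b a) ×ˢ (Set.univ : Set ℝ)) ∩ {p : ℝ × ℝ | Wf n p.1 < p.2}
        ∩ ((Set.univ : Set ℝ) ×ˢ (Set.Iic h)) := by
      ext p
      simp only [hS_def, Set.mem_setOf_eq, Set.mem_inter_iff, Set.mem_prod, Set.mem_univ,
        and_true, true_and, Set.mem_Iic]
      tauto
    rw [this]
    exact ((measurableSet_Ioc.prod MeasurableSet.univ).inter
      (measurableSet_lt ((Wf_continuous n).measurable.comp measurable_fst) measurable_snd)).inter
      (MeasurableSet.univ.prod measurableSet_Iic)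
  set F : ℝ → ℝ → ℝ := fun u e => S.indicator (fun p => p.1 ^ k * Kf h p.2) (u, e) with hF_def
  have step1 : ∀ u, (∫ e, F u e)
      = (Set.Ioc b a).indicator (fun u => u ^ k * Real.sqrt (2 * (h - Wf n u))) u := by
    intro u
    by_cases hu : u ∈ Set.Ioc b a
    · have heqfun : (fun e => F u e)
          = fun e => u ^ k * (Set.Ioc (Wf n u) h).indicator (Kf h) e := by
        funext e
        show S.indicator (fun p => p.1 ^ k * Kf h p.2) (u, e) = _
        by_cases he : e ∈ Set.Ioc (Wf n u) h
        · rw [Set.indicator_of_mem (show (u, e) ∈ S from ⟨hu, he.1, he.2⟩),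
            Set.indicator_of_mem he]
        · rw [Set.indicator_of_notMem (show (u, e) ∉ S from fun hmem =>
            he ⟨hmem.2.1, hmem.2.2⟩), Set.indicator_of_notMem he]
          simp
      rw [heqfun, MeasureTheory.integral_const_mul,
        MeasureTheory.integral_indicator measurableSet_Ioc]
      have hWu : Wf n u ≤ h := Wub u ⟨hu.1.le, hu.2⟩
      rw [← intervalIntegral.integral_of_le hWu, integral_Kf hWu,
        Set.indicator_of_mem hu]
    · have : ∀ e, F u e = 0 := by
        intro e
        rw [hF_def]
        exact Set.indicator_of_notMem (fun hmem => hu hmem.1) _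
      simp only [this, MeasureTheory.integral_zero]
      rw [Set.indicator_of_notMem hu]
  have hrk : (0:ℝ) ≤ r ^ k := by positivity
  have step2 : MeasureTheory.Integrable (Function.uncurry F)
      (MeasureTheory.volume.prod MeasureTheory.volume) := by
    have hmeasF : MeasureTheory.AEStronglyMeasurable (Function.uncurry F)
        (MeasureTheory.volume.prod MeasureTheory.volume) := by
      have : Function.uncurry F = S.indicator (fun p => p.1 ^ k * Kf h p.2) := by
        funext p
        rfl
      rw [this]
      exact (((measurable_fst.pow_const k).mul
        ((Kf_measurable h).comp measurable_snd)).indicator hSmeas).aestronglyMeasurable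
    set g2 : ℝ × ℝ → ℝ := fun p =>
      (Set.Ioc b a).indicator (fun _ => r ^ k) p.1 * (Set.Ioc 0 h).indicator (Kf h) p.2
      with hg2_def
    have hg2int : MeasureTheory.Integrable g2
        (MeasureTheory.volume.prod MeasureTheory.volume) := by
      apply MeasureTheory.Integrable.mul_prod
      · rw [MeasureTheory.integrable_indicator_iff measurableSet_Ioc]
        exact MeasureTheory.integrableOn_const measure_Ioc_lt_top.ne
      · rw [MeasureTheory.integrable_indicator_iff measurableSet_Ioc]
        rw [← Set.uIoc_of_le hh.1.le, ← intervalIntegrable_iff]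
        exact intervalIntegrable_Kf h 0 h
    apply MeasureTheory.Integrable.mono' hg2int hmeasF
    apply MeasureTheory.ae_of_all
    intro p
    by_cases hp : p ∈ S
    · have hFp : Function.uncurry F p = p.1 ^ k * Kf h p.2 := by
        show S.indicator (fun p => p.1 ^ k * Kf h p.2) p = _
        rw [Set.indicator_of_mem hp]
      rw [hFp]
      have hp1 : |p.1| ≤ r := by
        rcases hp.1 with ⟨h1, h2⟩
        rw [abs_le]
        constructor
        · linarith [hb.1, h1]
        · linarith [ha.2, h2]
      have hb1 : |p.1 ^ k| ≤ r ^ k := by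
        rw [abs_pow]
        exact pow_le_pow_left₀ (abs_nonneg _) hp1 k
      have hp2 : p.2 ∈ Set.Ioc (0:ℝ) h := by
        constructor
        · exact lt_of_le_of_lt (Wnonneg p.1 ⟨hp.1.1.le, hp.1.2⟩) hp.2.1
        · exact hp.2.2
      rw [hg2_def]
      simp only
      rw [Set.indicator_of_mem hp.1, Set.indicator_of_mem hp2]
      rw [Real.norm_eq_abs, abs_mul, abs_of_nonneg (Kf_nonneg h p.2)]
      exact mul_le_mul_of_nonneg_right hb1 (Kf_nonneg h p.2)
    · have hFp : Function.uncurry F p = 0 := by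
        show S.indicator (fun p => p.1 ^ k * Kf h p.2) p = 0
        exact Set.indicator_of_notMem hp _
      rw [hFp]
      simp only [norm_zero, hg2_def]
      apply mul_nonneg
      · exact Set.indicator_nonneg (fun _ _ => hrk) _
      · exact Set.indicator_nonneg (fun x _ => Kf_nonneg h x) _
  have step3 := MeasureTheory.integral_integral_swap step2
  have step4 : ∀ e, (∫ u, F u e)
      = (Set.Ioc 0 h).indicator
        (fun e => Kf h e * (((α e) ^ (k+1) - (β e) ^ (k+1)) / ((k:ℝ)+1))) e := by
    intro e
    by_cases he : e ∈ Set.Ioc (0:ℝ) h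
    · have hsece := hsec e he
      have heqfun : (fun u => F u e)
          = fun u => Kf h e * (Set.Ioo (β e) (α e)).indicator (fun u => u ^ k) u := by
        funext u
        show S.indicator (fun p => p.1 ^ k * Kf h p.2) (u, e) = _
        by_cases hu : u ∈ Set.Ioo (β e) (α e)
        · have humem : u ∈ {u : ℝ | u ∈ Set.Ioc b a ∧ Wf n u < e} := by
            rw [hsece]; exact hu
          rw [Set.indicator_of_mem (show (u, e) ∈ S from ⟨humem.1, humem.2, he.2⟩),
            Set.indicator_of_mem hu]
          ring
        · have humem : u ∉ {u : ℝ | u ∈ Set.Ioc b a ∧ Wf n u < e} := by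
            rw [hsece]; exact hu
          rw [Set.indicator_of_notMem (show (u, e) ∉ S from fun hmem =>
              humem ⟨hmem.1, hmem.2.1⟩),
            Set.indicator_of_notMem hu]
          simp
      rw [heqfun, MeasureTheory.integral_const_mul,
        MeasureTheory.integral_indicator measurableSet_Ioo]
      have heIoo : e ∈ Set.Ioo (0:ℝ) d := ⟨he.1, lt_of_le_of_lt he.2 hh.2⟩
      have hbae : β e ≤ α e := ((hβd e heIoo).1.2.trans (hαd e heIoo).1.1).le
      rw [← MeasureTheory.integral_Ioc_eq_integral_Ioo,
        ← intervalIntegral.integral_of_le hbae, integral_pow,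
        Set.indicator_of_mem he]
    · have : ∀ u, F u e = 0 := by
        intro u
        rw [hF_def]
        apply Set.indicator_of_notMem
        intro hmem
        apply he
        refine ⟨?_, hmem.2.2⟩
        exact lt_of_le_of_lt (Wnonneg u ⟨hmem.1.1.le, hmem.1.2⟩) hmem.2.1
      simp only [this, MeasureTheory.integral_zero]
      rw [Set.indicator_of_notMem he]
  calc ∫ u in b..a, u ^ k * Real.sqrt (2 * (h - Wf n u))
      = ∫ u in Set.Ioc b a, u ^ k * Real.sqrt (2 * (h - Wf n u)) :=
        intervalIntegral.integral_of_le hba.le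
    _ = ∫ u, (Set.Ioc b a).indicator
          (fun u => u ^ k * Real.sqrt (2 * (h - Wf n u))) u :=
        (MeasureTheory.integral_indicator measurableSet_Ioc).symm
    _ = ∫ u, ∫ e, F u e := by
        congr 1
        funext u
        exact (step1 u).symm
    _ = ∫ e, ∫ u, F u e := step3
    _ = ∫ e, (Set.Ioc 0 h).indicator
          (fun e => Kf h e * (((α e) ^ (k+1) - (β e) ^ (k+1)) / ((k:ℝ)+1))) e := by
        congr 1
        funext e
        exact step4 e
    _ = ∫ e in Set.Ioc 0 h, Kf h e * (((α e) ^ (k+1) - (β e) ^ (k+1)) / ((k:ℝ)+1)) :=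
        MeasureTheory.integral_indicator measurableSet_Ioc
    _ = ∫ e in (0:ℝ)..h, Kf h e * (((α e) ^ (k+1) - (β e) ^ (k+1)) / ((k:ℝ)+1)) :=
        (intervalIntegral.integral_of_le hh.1.le).symm

end KeyRepr

section Main

variable {n k : ℕ} {r d : ℝ} {α β : ℝ → ℝ}

noncomputable def Af (α β : ℝ → ℝ) (k : ℕ) (e : ℝ) : ℝ :=
  ((α e) ^ (k+1) - (β e) ^ (k+1)) / ((k:ℝ)+1)

lemma alpha_strictMono (hn : n ≠ 0) (hr0 : 0 < r) (hrn : r ^ n = (n : ℝ) + 1)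
    (hαd : ∀ e ∈ Set.Ioo (0:ℝ) d, α e ∈ Set.Ioo 0 r ∧ Wf n (α e) = e) :
    StrictMonoOn α (Set.Ioo (0:ℝ) d) := by
  intro e he f hf hef
  by_contra hle
  push_neg at hle
  obtain ⟨hae, hWae⟩ := hαd e he
  obtain ⟨haf, hWaf⟩ := hαd f hf
  have := (Wf_strictMonoOn hn hr0 hrn).monotoneOn ⟨haf.1.le, haf.2.le⟩ ⟨hae.1.le, hae.2.le⟩ hle
  rw [hWae, hWaf] at this
  linarith

lemma beta_strictAnti (hn : n ≠ 0) (hr0 : 0 < r) (hrn : r ^ n = (n : ℝ) + 1)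
    (hβd : ∀ e ∈ Set.Ioo (0:ℝ) d, β e ∈ Set.Ioo (-r) 0 ∧ Wf n (β e) = e) :
    StrictAntiOn β (Set.Ioo (0:ℝ) d) := by
  intro e he f hf hef
  by_contra hle
  push_neg at hle
  obtain ⟨hbe, hWbe⟩ := hβd e he
  obtain ⟨hbf, hWbf⟩ := hβd f hf
  have := (Wf_strictAntiOn hn hr0 hrn).antitoneOn ⟨hbe.1.le, hbe.2.le⟩ ⟨hbf.1.le, hbf.2.le⟩ hle
  rw [hWbe, hWbf] at this
  linarith

lemma AK_integrable (hn : n ≠ 0) (hr0 : 0 < r) (hrn : r ^ n = (n : ℝ) + 1)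
    (hαd : ∀ e ∈ Set.Ioo (0:ℝ) d, α e ∈ Set.Ioo 0 r ∧ Wf n (α e) = e)
    (hβd : ∀ e ∈ Set.Ioo (0:ℝ) d, β e ∈ Set.Ioo (-r) 0 ∧ Wf n (β e) = e)
    (h' : ℝ) {b : ℝ} (hbd : b ∈ Set.Ioo (0:ℝ) d) (k : ℕ) :
    IntervalIntegrable (fun e => Af α β k e * Kf h' e) MeasureTheory.volume 0 b := by
  classical
  set αm : ℝ → ℝ := fun e => if e ≤ 0 then 0 else if e < d then α e else r with hαm_def
  set βm : ℝ → ℝ := fun e => if e ≤ 0 then 0 else if e < d then β e else -r with hβm_def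
  have hαm_vals : ∀ e, αm e = 0 ∨ (0 < e ∧ e < d ∧ αm e = α e) ∨ αm e = r := by
    intro e
    by_cases h1 : e ≤ 0
    · left; simp [hαm_def, h1]
    · by_cases h2 : e < d
      · right; left
        refine ⟨lt_of_not_ge h1, h2, ?_⟩
        simp [hαm_def, h1, h2]
      · right; right; simp [hαm_def, h1, h2]
  have hβm_vals : ∀ e, βm e = 0 ∨ (0 < e ∧ e < d ∧ βm e = β e) ∨ βm e = -r := by
    intro e
    by_cases h1 : e ≤ 0
    · left; simp [hβm_def, h1]
    · by_cases h2 : e < d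
      · right; left
        refine ⟨lt_of_not_ge h1, h2, ?_⟩
        simp [hβm_def, h1, h2]
      · right; right; simp [hβm_def, h1, h2]
  have hαm_bound : ∀ e, |αm e| ≤ r := by
    intro e
    rcases hαm_vals e with h | ⟨h1, h2, h3⟩ | h
    · rw [h]; simp [hr0.le]
    · rw [h3]
      have := (hαd e ⟨h1, h2⟩).1
      rw [abs_le]; constructor <;> [linarith [this.1]; linarith [this.2]]
    · rw [h, abs_of_nonneg hr0.le]
  have hβm_bound : ∀ e, |βm e| ≤ r := by
    intro e
    rcases hβm_vals e with h | ⟨h1, h2, h3⟩ | h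
    · rw [h]; simp [hr0.le]
    · rw [h3]
      have := (hβd e ⟨h1, h2⟩).1
      rw [abs_le]; constructor <;> [linarith [this.1]; linarith [this.2]]
    · rw [h, abs_neg, abs_of_nonneg hr0.le]
  have hαmono := alpha_strictMono hn hr0 hrn hαd
  have hβanti := beta_strictAnti hn hr0 hrn hβd
  have hαm_mono : Monotone αm := by
    intro x y hxy
    by_cases hx1 : x ≤ 0
    · have : αm x = 0 := by simp [hαm_def, hx1]
      rw [this]
      rcases hαm_vals y with h | ⟨h1, h2, h3⟩ | h
      · rw [h]
      · rw [h3]; exact (hαd y ⟨h1, h2⟩).1.1.le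
      · rw [h]; exact hr0.le
    · push_neg at hx1
      have hy1 : ¬ y ≤ 0 := by push_neg; exact hx1.trans_le hxy
      by_cases hx2 : x < d
      · have hαmx : αm x = α x := by simp [hαm_def, not_le.mpr hx1, hx2]
        rw [hαmx]
        by_cases hy2 : y < d
        · have : αm y = α y := by simp [hαm_def, hy1, hy2]
          rw [this]
          rcases eq_or_lt_of_le hxy with rfl | hlt
          · exact le_refl _
          · exact (hαmono ⟨hx1, hx2⟩ ⟨hx1.trans_le hxy, hy2⟩ hlt).le
        · have : αm y = r := by simp [hαm_def, hy1, hy2]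
          rw [this]
          exact (hαd x ⟨hx1, hx2⟩).1.2.le
      · have hy2 : ¬ y < d := fun hc => hx2 (lt_of_le_of_lt hxy hc)
        have h1 : αm x = r := by simp [hαm_def, not_le.mpr hx1, hx2]
        have h2 : αm y = r := by simp [hαm_def, hy1, hy2]
        rw [h1, h2]
  have hβm_anti : Antitone βm := by
    intro x y hxy
    by_cases hx1 : x ≤ 0
    · have : βm x = 0 := by simp [hβm_def, hx1]
      rw [this]
      rcases hβm_vals y with h | ⟨h1, h2, h3⟩ | h
      · rw [h]
      · rw [h3]; exact (hβd y ⟨h1, h2⟩).1.2.le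
      · rw [h]; linarith
    · push_neg at hx1
      have hy1 : ¬ y ≤ 0 := by push_neg; exact hx1.trans_le hxy
      by_cases hx2 : x < d
      · have hβmx : βm x = β x := by simp [hβm_def, not_le.mpr hx1, hx2]
        rw [hβmx]
        by_cases hy2 : y < d
        · have : βm y = β y := by simp [hβm_def, hy1, hy2]
          rw [this]
          rcases eq_or_lt_of_le hxy with rfl | hlt
          · exact le_refl _
          · exact (hβanti ⟨hx1, hx2⟩ ⟨hx1.trans_le hxy, hy2⟩ hlt).le
        · have : βm y = -r := by simp [hβm_def, hy1, hy2]
          rw [this]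
          linarith [(hβd x ⟨hx1, hx2⟩).1.1]
      · have hy2 : ¬ y < d := fun hc => hx2 (lt_of_le_of_lt hxy hc)
        have h1 : βm x = -r := by simp [hβm_def, not_le.mpr hx1, hx2]
        have h2 : βm y = -r := by simp [hβm_def, hy1, hy2]
        rw [h1, h2]
  set Am : ℝ → ℝ := fun e => ((αm e) ^ (k+1) - (βm e) ^ (k+1)) / ((k:ℝ)+1) with hAm_def
  have hAm_meas : Measurable Am := by
    apply Measurable.div_const
    exact (hαm_mono.measurable.pow_const (k+1)).sub (hβm_anti.measurable.pow_const (k+1))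
  set C0 : ℝ := r ^ (k+1) + r ^ (k+1) with hC0_def
  have hAm_bound : ∀ e, |Am e| ≤ C0 := by
    intro e
    calc |Am e| ≤ |(αm e) ^ (k+1) - (βm e) ^ (k+1)| := by
          rw [hAm_def]
          simp only
          rw [abs_div]
          apply div_le_self (abs_nonneg _)
          rw [abs_of_nonneg (by positivity : (0:ℝ) ≤ (k:ℝ)+1)]
          linarith [Nat.cast_nonneg (α := ℝ) k]
      _ ≤ |(αm e) ^ (k+1)| + |(βm e) ^ (k+1)| := abs_sub _ _
      _ ≤ C0 := by
          rw [hC0_def, abs_pow, abs_pow]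
          gcongr
          · exact hαm_bound e
          · exact hβm_bound e
  rw [intervalIntegrable_iff, Set.uIoc_of_le hbd.1.le]
  have hKint : MeasureTheory.IntegrableOn (Kf h') (Set.Ioc 0 b) MeasureTheory.volume := by
    rw [← Set.uIoc_of_le hbd.1.le, ← intervalIntegrable_iff]
    exact intervalIntegrable_Kf h' 0 b
  have hAmKint : MeasureTheory.IntegrableOn (fun e => Am e * Kf h' e) (Set.Ioc 0 b)
      MeasureTheory.volume := by
    apply MeasureTheory.Integrable.mono' (hKint.const_mul C0)
    · exact (hAm_meas.mul (Kf_measurable h')).aestronglyMeasurable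
    · apply MeasureTheory.ae_of_all
      intro e
      rw [Real.norm_eq_abs, abs_mul, abs_of_nonneg (Kf_nonneg h' e)]
      exact mul_le_mul_of_nonneg_right (hAm_bound e) (Kf_nonneg h' e)
  apply hAmKint.congr_fun _ measurableSet_Ioc
  intro e he
  have heIoo : e ∈ Set.Ioo (0:ℝ) d := ⟨he.1, lt_of_le_of_lt he.2 hbd.2⟩
  have h1 : αm e = α e := by simp [hαm_def, not_le.mpr heIoo.1, heIoo.2]
  have h2 : βm e = β e := by simp [hβm_def, not_le.mpr heIoo.1, heIoo.2]
  simp only [hAm_def, Af, h1, h2]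

lemma geom_key (n : ℕ) (x y : ℝ) :
    (∑ k ∈ Finset.range (n + 1), x ^ (n - k) * y ^ k) * (x - y) = x ^ (n+1) - y ^ (n+1) := by
  have h1 := geom_sum₂_mul x y (n+1)
  rw [← h1]
  congr 1
  rw [← Finset.sum_range_reflect (fun k => x ^ (n - k) * y ^ k) (n+1)]
  apply Finset.sum_congr rfl
  intro i hi
  have hi' : i ≤ n := Nat.lt_succ_iff.mp (Finset.mem_range.mp hi)
  simp only [Nat.add_sub_cancel]
  rw [Nat.sub_sub_self hi']

lemma Af_zero_eq (e : ℝ) : Af α β 0 e = α e - β e := by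
  simp [Af]

lemma cross_ineq {η : ℝ → ℝ} (hn : n ≠ 0) (hr0 : 0 < r) (hrn : r ^ n = (n : ℝ) + 1)
    (hαd : ∀ e ∈ Set.Ioo (0:ℝ) d, α e ∈ Set.Ioo 0 r ∧ Wf n (α e) = e)
    (hβd : ∀ e ∈ Set.Ioo (0:ℝ) d, β e ∈ Set.Ioo (-r) 0 ∧ Wf n (β e) = e)
    (hT : StrictMonoOn
      (fun u => ∑ k ∈ Finset.range (n + 1), u ^ (n - k) * (η u) ^ k)
      (Set.Ioo (0 : ℝ) r))
    (hηβ : ∀ e ∈ Set.Ioo (0:ℝ) d, η (α e) = β e)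
    {e f : ℝ} (he : e ∈ Set.Ioo (0:ℝ) d) (hf : f ∈ Set.Ioo (0:ℝ) d) (hfe : f < e) :
    Af α β n f * Af α β 0 e < Af α β n e * Af α β 0 f := by
  set Pe : ℝ := ∑ k ∈ Finset.range (n + 1), (α e) ^ (n - k) * (β e) ^ k with hPe_def
  set Pf : ℝ := ∑ k ∈ Finset.range (n + 1), (α f) ^ (n - k) * (β f) ^ k with hPf_def
  have hQe : 0 < α e - β e := by
    have h1 := (hαd e he).1.1
    have h2 := (hβd e he).1.2
    linarith
  have hQf : 0 < α f - β f := by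
    have h1 := (hαd f hf).1.1
    have h2 := (hβd f hf).1.2
    linarith
  have hP : Pf < Pe := by
    have h1 := hT (hαd f hf).1 (hαd e he).1
      (alpha_strictMono hn hr0 hrn hαd hf he hfe)
    simp only [hηβ e he, hηβ f hf] at h1
    exact h1
  have hAfn : ∀ g ∈ Set.Ioo (0:ℝ) d, Af α β n g
      = (∑ k ∈ Finset.range (n + 1), (α g) ^ (n - k) * (β g) ^ k) * (α g - β g)
        / ((n:ℝ)+1) := by
    intro g hg
    rw [Af, ← geom_key n (α g) (β g)]
  have hc : (0:ℝ) < (n:ℝ)+1 := by positivity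
  calc Af α β n f * Af α β 0 e = (Pf * (α f - β f) * (α e - β e)) / ((n:ℝ)+1) := by
        rw [hAfn f hf, Af_zero_eq]
        ring
    _ < (Pe * (α e - β e) * (α f - β f)) / ((n:ℝ)+1) := by
        rw [div_lt_div_iff_of_pos_right hc]
        nlinarith [mul_pos hQf hQe]
    _ = Af α β n e * Af α β 0 f := by
        rw [hAfn e he, Af_zero_eq]
        ring

lemma main_ineq {η : ℝ → ℝ} (hn : n ≠ 0) (hr0 : 0 < r) (hrn : r ^ n = (n : ℝ) + 1)
    (hαd : ∀ e ∈ Set.Ioo (0:ℝ) d, α e ∈ Set.Ioo 0 r ∧ Wf n (α e) = e)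
    (hβd : ∀ e ∈ Set.Ioo (0:ℝ) d, β e ∈ Set.Ioo (-r) 0 ∧ Wf n (β e) = e)
    (hT : StrictMonoOn
      (fun u => ∑ k ∈ Finset.range (n + 1), u ^ (n - k) * (η u) ^ k)
      (Set.Ioo (0 : ℝ) r))
    (hηβ : ∀ e ∈ Set.Ioo (0:ℝ) d, η (α e) = β e)
    {h1 h2 : ℝ} (hh1 : h1 ∈ Set.Ioo (0:ℝ) d) (hh2 : h2 ∈ Set.Ioo (0:ℝ) d) (h12 : h1 < h2)
    (hD12 : (∫ e in (0:ℝ)..h1, Af α β 0 e * Kf h1 e)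
      ≤ ∫ e in (0:ℝ)..h2, Af α β 0 e * Kf h2 e) :
    (∫ e in (0:ℝ)..h1, Af α β n e * Kf h1 e) * (∫ e in (0:ℝ)..h2, Af α β 0 e * Kf h2 e)
      < (∫ e in (0:ℝ)..h2, Af α β n e * Kf h2 e)
        * (∫ e in (0:ℝ)..h1, Af α β 0 e * Kf h1 e) := by
  have intk : ∀ (j : ℝ) (k : ℕ),
      IntervalIntegrable (fun e => Af α β k e * Kf j e) MeasureTheory.volume 0 h2 :=
    fun j k => AK_integrable hn hr0 hrn hαd hβd j hh2 k
  have hsub1 : Set.uIcc (0:ℝ) h1 ⊆ Set.uIcc (0:ℝ) h2 := by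
    rw [Set.uIcc_of_le hh1.1.le, Set.uIcc_of_le hh2.1.le]
    exact Set.Icc_subset_Icc le_rfl h12.le
  have hsub2 : Set.uIcc h1 h2 ⊆ Set.uIcc (0:ℝ) h2 := by
    rw [Set.uIcc_of_le h12.le, Set.uIcc_of_le hh2.1.le]
    exact Set.Icc_subset_Icc hh1.1.le le_rfl
  -- tails vanish
  have tail : ∀ k : ℕ, (∫ e in h1..h2, Af α β k e * Kf h1 e) = 0 := by
    intro k
    rw [intervalIntegral.integral_congr (g := fun _ => (0:ℝ)), intervalIntegral.integral_zero]
    intro e he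
    rw [Set.uIcc_of_le h12.le] at he
    simp only
    rw [Kf_eq_zero he.1, mul_zero]
  have ext : ∀ k : ℕ, (∫ e in (0:ℝ)..h1, Af α β k e * Kf h1 e)
      = ∫ e in (0:ℝ)..h2, Af α β k e * Kf h1 e := by
    intro k
    rw [← intervalIntegral.integral_add_adjacent_intervals
      ((intk h1 k).mono_set hsub1) ((intk h1 k).mono_set hsub2), tail k, add_zero]
  set N1 : ℝ := ∫ e in (0:ℝ)..h2, Af α β n e * Kf h1 e with hN1
  set N2 : ℝ := ∫ e in (0:ℝ)..h2, Af α β n e * Kf h2 e with hN2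
  set D1 : ℝ := ∫ e in (0:ℝ)..h2, Af α β 0 e * Kf h1 e with hD1
  set D2 : ℝ := ∫ e in (0:ℝ)..h2, Af α β 0 e * Kf h2 e with hD2
  have hD12' : D1 ≤ D2 := by
    rw [hD1, ← ext 0]
    exact hD12
  -- positivity of D1
  have hD1pos : 0 < D1 := by
    rw [hD1, ← ext 0]
    apply intervalIntegral.intervalIntegral_pos_of_pos_on ((intk h1 0).mono_set hsub1)
      _ hh1.1
    intro e he
    have heD : e ∈ Set.Ioo (0:ℝ) d := ⟨he.1, he.2.trans hh1.2⟩
    have hA0 : 0 < Af α β 0 e := by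
      rw [Af_zero_eq]
      have := (hαd e heD).1.1
      have := (hβd e heD).1.2
      linarith
    exact mul_pos hA0 (Kf_pos he.2)
  set q : ℝ := Af α β 0 h1 with hq_def
  set c : ℝ := Af α β n h1 with hc_def
  have hq : 0 < q := by
    rw [hq_def, Af_zero_eq]
    have := (hαd h1 hh1).1.1
    have := (hβd h1 hh1).1.2
    linarith
  set G : ℝ → ℝ := fun e =>
    (Af α β n e * q - Af α β 0 e * c) * (Kf h2 e * D1 - Kf h1 e * D2) with hG_def
  have hGrepr : G = fun e =>
      ((q * D1) * (Af α β n e * Kf h2 e) - (q * D2) * (Af α β n e * Kf h1 e))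
      - ((c * D1) * (Af α β 0 e * Kf h2 e) - (c * D2) * (Af α β 0 e * Kf h1 e)) := by
    funext e
    rw [hG_def]
    ring
  have hGint : IntervalIntegrable G MeasureTheory.volume 0 h2 := by
    rw [hGrepr]
    exact (((intk h2 n).const_mul _).sub ((intk h1 n).const_mul _)).sub
      (((intk h2 0).const_mul _).sub ((intk h1 0).const_mul _))
  have hGval : (∫ e in (0:ℝ)..h2, G e) = q * (N2 * D1 - N1 * D2) := by
    rw [hGrepr]
    rw [intervalIntegral.integral_sub
      (((intk h2 n).const_mul _).sub ((intk h1 n).const_mul _))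
      (((intk h2 0).const_mul _).sub ((intk h1 0).const_mul _))]
    rw [intervalIntegral.integral_sub ((intk h2 n).const_mul _) ((intk h1 n).const_mul _)]
    rw [intervalIntegral.integral_sub ((intk h2 0).const_mul _) ((intk h1 0).const_mul _)]
    rw [intervalIntegral.integral_const_mul, intervalIntegral.integral_const_mul,
      intervalIntegral.integral_const_mul, intervalIntegral.integral_const_mul]
    rw [← hN1, ← hN2, ← hD1, ← hD2]
    ring
  -- pointwise nonnegativity
  have hGnonneg : ∀ e ∈ Set.Ioo (0:ℝ) h2, 0 ≤ G e := by
    intro e he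
    have heD : e ∈ Set.Ioo (0:ℝ) d := ⟨he.1, he.2.trans hh2.2⟩
    rw [hG_def]
    simp only
    rcases lt_trichotomy e h1 with hcmp | hcmp | hcmp
    · have hfac1 : Af α β n e * q - Af α β 0 e * c < 0 := by
        have := cross_ineq hn hr0 hrn hαd hβd hT hηβ hh1 heD hcmp
        rw [← hq_def, ← hc_def] at this
        nlinarith [this]
      have hK21 : Kf h2 e ≤ Kf h1 e := by
        unfold Kf
        apply inv_anti₀
        · apply Real.sqrt_pos.mpr
          linarith [hcmp]
        · apply Real.sqrt_le_sqrt
          linarith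
      have hfac2 : Kf h2 e * D1 - Kf h1 e * D2 ≤ 0 := by
        have h1' : Kf h2 e * D1 ≤ Kf h1 e * D1 :=
          mul_le_mul_of_nonneg_right hK21 hD1pos.le
        have h2' : Kf h1 e * D1 ≤ Kf h1 e * D2 :=
          mul_le_mul_of_nonneg_left hD12' (Kf_nonneg _ _)
        linarith
      nlinarith [hfac1, hfac2]
    · subst hcmp
      rw [← hq_def, ← hc_def]
      have : c * q - q * c = 0 := by ring
      nlinarith [this]
    · have hfac1 : 0 < Af α β n e * q - Af α β 0 e * c := by
        have := cross_ineq hn hr0 hrn hαd hβd hT hηβ heD hh1 hcmp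
        rw [← hq_def, ← hc_def] at this
        nlinarith [this]
      have hfac2 : 0 ≤ Kf h2 e * D1 - Kf h1 e * D2 := by
        rw [Kf_eq_zero hcmp.le]
        have : 0 ≤ Kf h2 e * D1 := mul_nonneg (Kf_nonneg _ _) hD1pos.le
        linarith
      exact mul_nonneg hfac1.le hfac2
  -- total integral is positive
  have total_pos : 0 < ∫ e in (0:ℝ)..h2, G e := by
    rw [← intervalIntegral.integral_add_adjacent_intervals
      (hGint.mono_set hsub1) (hGint.mono_set hsub2)]
    have first_nonneg : 0 ≤ ∫ e in (0:ℝ)..h1, G e := by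
      apply intervalIntegral.integral_nonneg_of_ae_restrict hh1.1.le
      rw [← MeasureTheory.Measure.restrict_congr_set MeasureTheory.Ioo_ae_eq_Icc]
      filter_upwards [MeasureTheory.ae_restrict_mem measurableSet_Ioo] with e he
      exact hGnonneg e ⟨he.1, he.2.trans h12⟩
    have second_pos : 0 < ∫ e in h1..h2, G e := by
      apply intervalIntegral.intervalIntegral_pos_of_pos_on (hGint.mono_set hsub2) _ h12
      intro e he
      have heD : e ∈ Set.Ioo (0:ℝ) d := ⟨hh1.1.trans he.1, he.2.trans hh2.2⟩
      rw [hG_def]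
      simp only
      have hfac1 : 0 < Af α β n e * q - Af α β 0 e * c := by
        have := cross_ineq hn hr0 hrn hαd hβd hT hηβ heD hh1 he.1
        rw [← hq_def, ← hc_def] at this
        nlinarith [this]
      have hfac2 : 0 < Kf h2 e * D1 - Kf h1 e * D2 := by
        rw [Kf_eq_zero he.1.le]
        have : 0 < Kf h2 e * D1 := mul_pos (Kf_pos he.2) hD1pos
        linarith
      exact mul_pos hfac1 hfac2
    linarith
  rw [hGval] at total_pos
  rw [ext n, ext 0]
  rw [← hN1, ← hD1]
  nlinarith [total_pos, hq]

lemma I0_mono (hn : n ≠ 0) (hr0 : 0 < r) (hrn : r ^ n = (n : ℝ) + 1)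
    (hαd : ∀ e ∈ Set.Ioo (0:ℝ) d, α e ∈ Set.Ioo 0 r ∧ Wf n (α e) = e)
    (hβd : ∀ e ∈ Set.Ioo (0:ℝ) d, β e ∈ Set.Ioo (-r) 0 ∧ Wf n (β e) = e)
    {h1 h2 : ℝ} (hh1 : h1 ∈ Set.Ioo (0:ℝ) d) (hh2 : h2 ∈ Set.Ioo (0:ℝ) d) (h12 : h1 < h2) :
    (∫ u in (β h1)..(α h1), Real.sqrt (2 * (h1 - Wf n u)))
      ≤ ∫ u in (β h2)..(α h2), Real.sqrt (2 * (h2 - Wf n u)) := by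
  have hcont : ∀ h' : ℝ, Continuous fun u : ℝ => Real.sqrt (2 * (h' - Wf n u)) := by
    intro h'
    apply Real.continuous_sqrt.comp
    have := Wf_continuous n
    continuity
  have hα12 : α h1 ≤ α h2 := (alpha_strictMono hn hr0 hrn hαd hh1 hh2 h12).le
  have hβ21 : β h2 ≤ β h1 := (beta_strictAnti hn hr0 hrn hβd hh1 hh2 h12).le
  have hb1a1 : β h1 ≤ α h1 := ((hβd h1 hh1).1.2.trans (hαd h1 hh1).1.1).le
  calc (∫ u in (β h1)..(α h1), Real.sqrt (2 * (h1 - Wf n u)))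
      ≤ ∫ u in (β h1)..(α h1), Real.sqrt (2 * (h2 - Wf n u)) := by
        apply intervalIntegral.integral_mono_on hb1a1
          ((hcont h1).intervalIntegrable _ _) ((hcont h2).intervalIntegrable _ _)
        intro u _
        apply Real.sqrt_le_sqrt
        linarith
    _ ≤ ∫ u in (β h2)..(α h2), Real.sqrt (2 * (h2 - Wf n u)) := by
        rw [← intervalIntegral.integral_add_adjacent_intervals
            (a := β h2) (b := β h1) (c := α h2)
          ((hcont h2).intervalIntegrable _ _) ((hcont h2).intervalIntegrable _ _),
          ← intervalIntegral.integral_add_adjacent_intervals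
            (a := β h1) (b := α h1) (c := α h2)
          ((hcont h2).intervalIntegrable _ _) ((hcont h2).intervalIntegrable _ _)]
        have t1 : 0 ≤ ∫ u in (β h2)..(β h1), Real.sqrt (2 * (h2 - Wf n u)) :=
          intervalIntegral.integral_nonneg hβ21 (fun u _ => Real.sqrt_nonneg _)
        have t2 : 0 ≤ ∫ u in (α h1)..(α h2), Real.sqrt (2 * (h2 - Wf n u)) :=
          intervalIntegral.integral_nonneg hα12 (fun u _ => Real.sqrt_nonneg _)
        linarith

lemma Wf_neg_r_gt (hn : n ≠ 0) (hr0 : 0 < r) (hrn : r ^ n = (n : ℝ) + 1) (ho : Odd n) :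
    Wf n r < Wf n (-r) := by
  have h2 : r ^ (n + 2) = ((n : ℝ) + 1) * r ^ 2 := by rw [pow_add, hrn]
  have hodd : Odd (n + 2) := by
    rcases ho with ⟨m, hm⟩
    exact ⟨m + 1, by omega⟩
  have hneg : (-r) ^ (n + 2) = -(r ^ (n + 2)) := hodd.neg_pow r
  have hn1 : (0:ℝ) < (n : ℝ) + 1 := by positivity
  have hn2 : (0:ℝ) < (n : ℝ) + 2 := by positivity
  have hr2 : (0:ℝ) < r ^ 2 := by positivity
  unfold Wf
  rw [hneg]
  have h2sq : (-r) ^ 2 = r ^ 2 := by ring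
  rw [h2sq, neg_div]
  have hp : 0 < r ^ (n + 2) / (((n:ℝ) + 1) * ((n:ℝ) + 2)) := by positivity
  linarith

end Main

/-- The monotonicity criterion (Lemma 4.2) specialized to
`W(u) = u²/2 - u^(n+2)/((n+1)(n+2))`: if `T_n(u) = ∑_{k=0}^n u^(n-k) η(u)^k` is
strictly increasing on `(0, (n+1)^(1/n))`, then the ratio of Abelian integrals
`B̃_n` is strictly increasing on `(0, d_n)`. -/
theorem monotonicity_criterion (n : ℕ) (hn : 0 < n)
    (W : ℝ → ℝ)
    (hW : ∀ u : ℝ, W u = u ^ 2 / 2 - u ^ (n + 2) / (((n : ℝ) + 1) * ((n : ℝ) + 2)))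
    (r : ℝ) (hr : r = ((n : ℝ) + 1) ^ ((1 : ℝ) / n))
    (d : ℝ) (hd : d = (n : ℝ) * ((n : ℝ) + 1) ^ ((2 : ℝ) / n) / (2 * ((n : ℝ) + 2)))
    (nstar : ℝ) (hodd : Odd n → nstar < 0 ∧ W nstar = d)
    (α β : ℝ → ℝ)
    (hα : ∀ h ∈ Set.Ioo (0 : ℝ) d, α h ∈ Set.Ioo 0 r ∧ W (α h) = h)
    (hβW : ∀ h ∈ Set.Ioo (0 : ℝ) d, W (β h) = h)
    (hβeven : Even n → ∀ h ∈ Set.Ioo (0 : ℝ) d, β h ∈ Set.Ioo (-r) 0)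
    (hβodd : Odd n → ∀ h ∈ Set.Ioo (0 : ℝ) d, β h ∈ Set.Ioo nstar 0)
    (η : ℝ → ℝ)
    (hηW : ∀ u ∈ Set.Ioo (0 : ℝ) r, W (η u) = W u)
    (hηeven : Even n → ∀ u ∈ Set.Ioo (0 : ℝ) r, η u ∈ Set.Ioo (-r) 0)
    (hηodd : Odd n → ∀ u ∈ Set.Ioo (0 : ℝ) r, η u ∈ Set.Ioo nstar 0)
    (hT : StrictMonoOn
      (fun u => ∑ k ∈ Finset.range (n + 1), u ^ (n - k) * (η u) ^ k)
      (Set.Ioo (0 : ℝ) r))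
    (B : ℝ → ℝ)
    (hB : ∀ h : ℝ, B h =
      (∫ u in (β h)..(α h), u ^ n * Real.sqrt (2 * (h - W u))) /
      (∫ u in (β h)..(α h), Real.sqrt (2 * (h - W u)))) :
    StrictMonoOn B (Set.Ioo (0 : ℝ) d) := by

  have hWf : W = Wf n := funext fun u => hW u
  subst hWf
  have hn' : n ≠ 0 := hn.ne'
  have hncast : (0:ℝ) < (n:ℝ) := Nat.cast_pos.mpr hn
  have hr0 : 0 < r := by
    rw [hr]
    exact Real.rpow_pos_of_pos (by positivity) _
  have hrn : r ^ n = (n : ℝ) + 1 := by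
    rw [hr, ← Real.rpow_natCast (((n:ℝ) + 1) ^ ((1:ℝ) / n)) n, ← Real.rpow_mul (by positivity)]
    rw [one_div, inv_mul_cancel₀ (by exact_mod_cast hn'), Real.rpow_one]
  -- unified bounds for β and η
  have hnstar_gt : Odd n → -r < nstar := by
    intro ho
    obtain ⟨hns_neg, hns_W⟩ := hodd ho
    by_contra hle
    push_neg at hle
    have hanti := Wf_strictAntiOn_odd (n := n) ho
    have hd_eq : d = Wf n r := by
      rw [hd, Wf_r hn' hrn]
      have hr2 : r ^ 2 = ((n:ℝ) + 1) ^ ((2:ℝ) / n) := by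
        rw [hr, ← Real.rpow_natCast (((n:ℝ) + 1) ^ ((1:ℝ) / n)) 2,
          ← Real.rpow_mul (by positivity)]
        norm_num
        congr 1
        ring
      rw [hr2]
      ring
    have h1 : Wf n (-r) ≤ Wf n nstar := by
      rcases eq_or_lt_of_le hle with heq | hlt
      · rw [heq]
      · exact (hanti (Set.mem_Iic.mpr hns_neg.le)
          (Set.mem_Iic.mpr (by linarith : -r ≤ (0:ℝ))) hlt).le
    rw [hns_W, hd_eq] at h1
    have := Wf_neg_r_gt hn' hr0 hrn ho
    linarith
  have hβ' : ∀ h ∈ Set.Ioo (0:ℝ) d, β h ∈ Set.Ioo (-r) 0 := by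
    rcases Nat.even_or_odd n with he | ho
    · exact hβeven he
    · intro h hh
      have hb := hβodd ho h hh
      exact ⟨(hnstar_gt ho).trans hb.1, hb.2⟩
  have hη' : ∀ u ∈ Set.Ioo (0:ℝ) r, η u ∈ Set.Ioo (-r) 0 := by
    rcases Nat.even_or_odd n with he | ho
    · exact hηeven he
    · intro u hu
      have hb := hηodd ho u hu
      exact ⟨(hnstar_gt ho).trans hb.1, hb.2⟩
  have hαd : ∀ e ∈ Set.Ioo (0:ℝ) d, α e ∈ Set.Ioo 0 r ∧ Wf n (α e) = e := hα
  have hβd : ∀ e ∈ Set.Ioo (0:ℝ) d, β e ∈ Set.Ioo (-r) 0 ∧ Wf n (β e) = e :=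
    fun e he => ⟨hβ' e he, hβW e he⟩
  -- the involution matches β ∘ W on the positive branch
  have hηβ : ∀ e ∈ Set.Ioo (0:ℝ) d, η (α e) = β e := by
    intro e he
    have hαe := (hαd e he).1
    have hWαe := (hαd e he).2
    have hηmem := hη' (α e) hαe
    have hβmem := (hβd e he).1
    have hWeq : Wf n (η (α e)) = Wf n (β e) := by
      rw [hηW (α e) hαe, hWαe, (hβd e he).2]
    exact (Wf_strictAntiOn hn' hr0 hrn).injOn
      ⟨hηmem.1.le, hηmem.2.le⟩ ⟨hβmem.1.le, hβmem.2.le⟩ hWeq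
  -- B in terms of the energy-space integrals
  have hBval : ∀ h ∈ Set.Ioo (0:ℝ) d, B h
      = (∫ e in (0:ℝ)..h, Af α β n e * Kf h e) / (∫ e in (0:ℝ)..h, Af α β 0 e * Kf h e) := by
    intro h hh
    rw [hB h]
    congr 1
    · rw [key_repr hn' hr0 hrn hαd hβd hh n]
      apply intervalIntegral.integral_congr
      intro e _
      simp only [Af]
      ring
    · have hfn : (fun u : ℝ => Real.sqrt (2 * (h - Wf n u)))
          = fun u : ℝ => u ^ 0 * Real.sqrt (2 * (h - Wf n u)) := by
        funext u
        rw [pow_zero, one_mul]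
      rw [hfn, key_repr hn' hr0 hrn hαd hβd hh 0]
      apply intervalIntegral.integral_congr
      intro e _
      simp only [Af]
      ring
  -- positivity of denominators
  have hDpos : ∀ h ∈ Set.Ioo (0:ℝ) d, 0 < ∫ e in (0:ℝ)..h, Af α β 0 e * Kf h e := by
    intro h hh
    apply intervalIntegral.intervalIntegral_pos_of_pos_on
      (AK_integrable hn' hr0 hrn hαd hβd h hh 0) _ hh.1
    intro e he
    have heD : e ∈ Set.Ioo (0:ℝ) d := ⟨he.1, he.2.trans hh.2⟩
    have hA0 : 0 < Af α β 0 e := by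
      rw [Af_zero_eq]
      have := (hαd e heD).1.1
      have := (hβd e heD).1.2
      linarith
    exact mul_pos hA0 (Kf_pos he.2)
  -- monotonicity of denominators (via the u-space representation)
  have hDmono : ∀ h1 h2, h1 ∈ Set.Ioo (0:ℝ) d → h2 ∈ Set.Ioo (0:ℝ) d → h1 < h2 →
      (∫ e in (0:ℝ)..h1, Af α β 0 e * Kf h1 e) ≤ ∫ e in (0:ℝ)..h2, Af α β 0 e * Kf h2 e := by
    intro h1 h2 hh1 hh2 h12
    have repr : ∀ h ∈ Set.Ioo (0:ℝ) d, (∫ e in (0:ℝ)..h, Af α β 0 e * Kf h e)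
        = ∫ u in (β h)..(α h), Real.sqrt (2 * (h - Wf n u)) := by
      intro h hh
      have hfn : (fun u : ℝ => Real.sqrt (2 * (h - Wf n u)))
          = fun u : ℝ => u ^ 0 * Real.sqrt (2 * (h - Wf n u)) := by
        funext u
        rw [pow_zero, one_mul]
      rw [hfn, key_repr hn' hr0 hrn hαd hβd hh 0]
      apply intervalIntegral.integral_congr
      intro e _
      simp only [Af]
      ring
    rw [repr h1 hh1, repr h2 hh2]
    exact I0_mono hn' hr0 hrn hαd hβd hh1 hh2 h12
  -- conclusion
  intro h1 hh1 h2 hh2 h12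
  rw [hBval h1 hh1, hBval h2 hh2]
  rw [div_lt_div_iff₀ (hDpos h1 hh1) (hDpos h2 hh2)]
  exact main_ineq hn' hr0 hrn hαd hβd hT hηβ hh1 hh2 h12 (hDmono h1 h2 hh1 hh2 h12)
end

section
/- Let W(u) = u²/2 - u⁴/12 and for h ∈ (0, 3/4) let α(h) ∈ (0, √3) be the unique root of W(u) = h in (0, √3), and define B̃₂(h) = (∫_{-α(h)}^{α(h)} u² √(2(h - W(u))) du)/(∫_{-α(h)}^{α(h)} √(2(h - W(u))) du). Then B̃₂(h) → 3/5 as h → (3/4)⁻, and consequently c₀(h) = 1/(1 - B̃₂(h)) → 5/2 as h → (3/4)⁻. -/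
open intervalIntegral Real Set Filter

private lemma sqrt_at_saddle {u : ℝ} (hu : u ∈ Set.uIcc (-Real.sqrt 3) (Real.sqrt 3)) :
    Real.sqrt (2 * (3 / 4 - (u ^ 2 / 2 - u ^ 4 / 12))) = (3 - u ^ 2) / Real.sqrt 6 := by
  have hs : (Real.sqrt 3) ^ 2 = 3 := Real.sq_sqrt (by norm_num)
  have hs0 : (0:ℝ) ≤ Real.sqrt 3 := Real.sqrt_nonneg 3
  rw [Set.uIcc_of_le (by linarith)] at hu
  obtain ⟨h1, h2⟩ := hu
  have hu2 : u ^ 2 ≤ 3 := by nlinarith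
  have h6 : (Real.sqrt 6) ^ 2 = 6 := Real.sq_sqrt (by norm_num)
  have h60 : (0:ℝ) < Real.sqrt 6 := Real.sqrt_pos.2 (by norm_num)
  have : 2 * (3 / 4 - (u ^ 2 / 2 - u ^ 4 / 12)) = ((3 - u ^ 2) / Real.sqrt 6) ^ 2 := by
    rw [div_pow, h6]; ring
  rw [this, Real.sqrt_sq (div_nonneg (by linarith) h60.le)]

private lemma integrand_cont (n : ℕ) :
    Continuous (Function.uncurry fun (h : ℝ) (u : ℝ) =>
      u ^ n * Real.sqrt (2 * (h - (u ^ 2 / 2 - u ^ 4 / 12)))) := by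
  fun_prop

/-- For `n = 2` (`W(u) = u²/2 - u⁴/12`), the ratio of Abelian
integrals `B̃₂(h)` tends to `3/5` as `h → (3/4)⁻`, hence the limit wave speed
`c₀(h) = 1/(1 - B̃₂(h))` tends to `5/2`. -/
theorem B2_limit_at_saddle (W : ℝ → ℝ)
    (hW : ∀ u : ℝ, W u = u ^ 2 / 2 - u ^ 4 / 12)
    (α : ℝ → ℝ)
    (hα : ∀ h ∈ Set.Ioo (0 : ℝ) (3 / 4),
      α h ∈ Set.Ioo 0 (Real.sqrt 3) ∧ W (α h) = h)
    (B : ℝ → ℝ)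
    (hB : ∀ h : ℝ, B h =
      (∫ u in (-α h)..(α h), u ^ 2 * Real.sqrt (2 * (h - W u))) /
      (∫ u in (-α h)..(α h), Real.sqrt (2 * (h - W u)))) :
    Filter.Tendsto B (nhdsWithin (3 / 4) (Set.Iio (3 / 4))) (nhds (3 / 5)) ∧
    Filter.Tendsto (fun h => 1 / (1 - B h))
      (nhdsWithin (3 / 4) (Set.Iio (3 / 4))) (nhds (5 / 2)) := by

  -- notation
  set s := Real.sqrt 3 with hs_def
  have hs2 : s ^ 2 = 3 := Real.sq_sqrt (by norm_num)
  have hs0 : 0 < s := Real.sqrt_pos.2 (by norm_num)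
  have hc2 : (Real.sqrt 6) ^ 2 = 6 := Real.sq_sqrt (by norm_num)
  have hc0 : (0:ℝ) < Real.sqrt 6 := Real.sqrt_pos.2 (by norm_num)
  set F : ℕ → ℝ → ℝ → ℝ := fun n h u => u ^ n * Real.sqrt (2 * (h - (u^2/2 - u^4/12)))
    with hF_def
  set N : ℝ → ℝ := fun h => ∫ u in (-s)..s, F 2 h u with hN_def
  set D : ℝ → ℝ := fun h => ∫ u in (-s)..s, F 0 h u with hD_def
  have contF : ∀ n, Continuous (Function.uncurry (F n)) := fun n => integrand_cont n
  have contN : Continuous N :=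
    intervalIntegral.continuous_parametric_intervalIntegral_of_continuous' (contF 2) _ _
  have contD : Continuous D :=
    intervalIntegral.continuous_parametric_intervalIntegral_of_continuous' (contF 0) _ _
  have contu : ∀ n h, Continuous (F n h) := by
    intro n h
    exact (contF n).comp (continuous_const.prodMk continuous_id)
  -- the integrals over [-α h, α h] coincide with those over [-s, s]
  have split : ∀ h ∈ Set.Ioo (0:ℝ) (3/4), ∀ n : ℕ,
      (∫ u in (-α h)..(α h), F n h u) = ∫ u in (-s)..s, F n h u := by
    intro h hh n
    obtain ⟨⟨ha0, has⟩, hWa⟩ := hα h hh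
    set a := α h
    rw [hW] at hWa
    have ha2 : a ^ 2 < 3 := by nlinarith
    have vanish : ∀ u : ℝ, a ^ 2 ≤ u ^ 2 → u ^ 2 ≤ 3 → F n h u = 0 := by
      intro u h1 h2
      have : 2 * (h - (u^2/2 - u^4/12)) ≤ 0 := by
        rw [← hWa]
        nlinarith [mul_nonneg (sub_nonneg.2 h1) (by linarith : (0:ℝ) ≤ 6 - u^2 - a^2)]
      have hz : Real.sqrt (2 * (h - (u^2/2 - u^4/12))) = 0 := Real.sqrt_eq_zero'.2 this
      simp only [hF_def]
      rw [hz, mul_zero]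
    have e1 : (∫ u in (-s)..(-a), F n h u) = 0 := by
      have heq : Set.EqOn (F n h) 0 (Set.uIcc (-s) (-a)) := by
        intro u hu
        rw [Set.uIcc_of_le (by linarith)] at hu
        exact vanish u (by nlinarith [hu.1, hu.2]) (by nlinarith [hu.1, hu.2])
      rw [intervalIntegral.integral_congr heq]; simp
    have e3 : (∫ u in a..s, F n h u) = 0 := by
      have heq : Set.EqOn (F n h) 0 (Set.uIcc a s) := by
        intro u hu
        rw [Set.uIcc_of_le (by linarith)] at hu
        exact vanish u (by nlinarith [hu.1, hu.2]) (by nlinarith [hu.1, hu.2])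
      rw [intervalIntegral.integral_congr heq]; simp
    have i : ∀ x y : ℝ, IntervalIntegrable (F n h) MeasureTheory.volume x y :=
      fun x y => (contu n h).intervalIntegrable x y
    have t1 := intervalIntegral.integral_add_adjacent_intervals (i (-s) (-a)) (i (-a) a)
    have t2 := intervalIntegral.integral_add_adjacent_intervals (i (-s) a) (i a s)
    rw [← t2, ← t1, e1, e3]
    ring
  -- values at the saddle level h = 3/4
  have N34 : N (3/4) = (12 * s / 5) / Real.sqrt 6 := by
    have heq : Set.EqOn (F 2 (3/4)) (fun u => (3 * u^2 - u^4) * (Real.sqrt 6)⁻¹)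
        (Set.uIcc (-s) s) := by
      intro u hu
      simp only [hF_def]
      rw [sqrt_at_saddle hu]
      ring
    rw [hN_def]
    simp only
    rw [intervalIntegral.integral_congr heq, intervalIntegral.integral_mul_const,
      intervalIntegral.integral_sub (Continuous.intervalIntegrable (by fun_prop) _ _) (Continuous.intervalIntegrable (by fun_prop) _ _),
      intervalIntegral.integral_const_mul, integral_pow, integral_pow]
    have h3 : s ^ 3 = 3 * s := by nlinarith
    have h5 : s ^ 5 = 9 * s := by nlinarith
    rw [show ((-s:ℝ)) ^ (2+1) = -(s^3) by ring, show ((-s:ℝ)) ^ (4+1) = -(s^5) by ring]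
    rw [h3, h5]
    field_simp
    ring
  have D34 : D (3/4) = (4 * s) / Real.sqrt 6 := by
    have heq : Set.EqOn (F 0 (3/4)) (fun u => (3 - u^2) * (Real.sqrt 6)⁻¹)
        (Set.uIcc (-s) s) := by
      intro u hu
      simp only [hF_def]
      rw [sqrt_at_saddle hu]
      ring
    rw [hD_def]
    simp only
    rw [intervalIntegral.integral_congr heq, intervalIntegral.integral_mul_const,
      intervalIntegral.integral_sub (Continuous.intervalIntegrable (by fun_prop) _ _) (Continuous.intervalIntegrable (by fun_prop) _ _),
      intervalIntegral.integral_const, integral_pow]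
    have h3 : s ^ 3 = 3 * s := by nlinarith
    rw [show ((-s:ℝ)) ^ (2+1) = -(s^3) by ring, h3]
    field_simp
    ring
  have D34ne : D (3/4) ≠ 0 := by
    rw [D34]; positivity
  have hratio : N (3/4) / D (3/4) = 3/5 := by
    rw [N34, D34]
    field_simp
    ring
  -- B agrees with N/D near the saddle
  have hev : ∀ᶠ h in nhdsWithin (3/4 : ℝ) (Set.Iio (3/4)), B h = N h / D h := by
    filter_upwards [Ioo_mem_nhdsLT_of_mem (by norm_num : (3/4:ℝ) ∈ Set.Ioc 0 (3/4))]
      with h hh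
    rw [hB h]
    have hnum : (∫ u in (-α h)..(α h), u ^ 2 * Real.sqrt (2 * (h - W u))) = N h := by
      rw [hN_def]
      simp only
      rw [← split h hh 2]
      apply intervalIntegral.integral_congr
      intro u _
      simp [hF_def, hW u]
    have hden : (∫ u in (-α h)..(α h), Real.sqrt (2 * (h - W u))) = D h := by
      rw [hD_def]
      simp only
      rw [← split h hh 0]
      apply intervalIntegral.integral_congr
      intro u _
      simp [hF_def, hW u]
    rw [hnum, hden]
  have tendstoND : Filter.Tendsto (fun h => N h / D h)
      (nhdsWithin (3/4) (Set.Iio (3/4))) (nhds (3/5)) := by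
    rw [← hratio]
    exact Filter.Tendsto.div
      ((contN.tendsto _).mono_left nhdsWithin_le_nhds)
      ((contD.tendsto _).mono_left nhdsWithin_le_nhds) D34ne
  have hBlim : Filter.Tendsto B (nhdsWithin (3/4) (Set.Iio (3/4))) (nhds (3/5)) :=
    tendstoND.congr' (hev.mono fun h e => e.symm)
  refine ⟨hBlim, ?_⟩
  have h2 : Filter.Tendsto (fun h => 1 - B h)
      (nhdsWithin (3/4) (Set.Iio (3/4))) (nhds (1 - 3/5)) :=
    tendsto_const_nhds.sub hBlim
  have h3 := Filter.Tendsto.div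
    (tendsto_const_nhds : Filter.Tendsto (fun _ : ℝ => (1:ℝ)) _ _) h2
    (by norm_num : (1 : ℝ) - 3/5 ≠ 0)
  convert h3 using 2
  norm_num
  norm_num
end

section
/- The following two definite integrals hold: ∫₀^{5^{1/4}} √(-u² + u⁶/15 + 2√5/3) du = -(√15/4) · ln(2 - √3) and ∫₀^{5^{1/4}} u⁴ √(-u² + u⁶/15 + 2√5/3) du = -(15√5/16) · (2 + √3 · ln 2 - 2√3 · ln(1 + √3)). -/
open Real

noncomputable def rrt (u : ℝ) : ℝ := Real.sqrt (u^2 + 2*Real.sqrt 5)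

lemma q_pos (u : ℝ) : 0 < u^2 + 2*Real.sqrt 5 := by positivity

lemma rrt_pos (u : ℝ) : 0 < rrt u := Real.sqrt_pos.mpr (q_pos u)

lemma rrt_sq (u : ℝ) : rrt u ^ 2 = u^2 + 2*Real.sqrt 5 := Real.sq_sqrt (q_pos u).le

lemma arg_pos (u : ℝ) : 0 < u + rrt u := by
  have h1 : Real.sqrt (u^2) < rrt u := by
    apply Real.sqrt_lt_sqrt (sq_nonneg u)
    have : 0 < Real.sqrt 5 := by positivity
    linarith
  rw [Real.sqrt_sq_eq_abs] at h1
  have := neg_abs_le u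
  linarith

lemma hasDerivAt_rrt (u : ℝ) : HasDerivAt rrt (u / rrt u) u := by
  have h1 : HasDerivAt (fun x : ℝ => x^2 + 2*Real.sqrt 5) (2*u) u := by
    simpa using ((hasDerivAt_pow 2 u).add_const (2*Real.sqrt 5))
  have h2 := (Real.hasDerivAt_sqrt (q_pos u).ne').comp u h1
  have hr := (rrt_pos u).ne'
  refine h2.congr_deriv ?_
  unfold rrt
  field_simp

lemma hasDerivAt_lg (u : ℝ) :
    HasDerivAt (fun x => Real.log (x + rrt x)) (1 / rrt u) u := by
  have h1 : HasDerivAt (fun x => x + rrt x) (1 + u / rrt u) u :=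
    (hasDerivAt_id u).add (hasDerivAt_rrt u)
  have h2 := (Real.hasDerivAt_log (arg_pos u).ne').comp u h1
  have hr := (rrt_pos u).ne'
  have ha := (arg_pos u).ne'
  refine h2.congr_deriv ?_
  field_simp
  ring

noncomputable def F1 (u : ℝ) : ℝ :=
  (u*(Real.sqrt 5 - u^2)/4 * rrt u + 15/2 * Real.log (u + rrt u)) / Real.sqrt 15

noncomputable def F2 (u : ℝ) : ℝ :=
  ((-u^7/8 + Real.sqrt 5 * u^5/8 + 15*u^3/16 - 45*Real.sqrt 5*u/16) * rrt u
    + 225/8 * Real.log (u + rrt u)) / Real.sqrt 15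

lemma hasDerivAt_F1 (u : ℝ) :
    HasDerivAt F1 ((Real.sqrt 5 - u^2) * rrt u / Real.sqrt 15) u := by
  have hp : HasDerivAt (fun x : ℝ => x*(Real.sqrt 5 - x^2)/4)
      ((Real.sqrt 5 - 3*u^2)/4) u := by
    have : HasDerivAt (fun x : ℝ => x*(Real.sqrt 5 - x^2)/4)
        ((1*(Real.sqrt 5 - u^2) + u*(0 - 2*u))/4) u := by
      exact (((hasDerivAt_id u).mul
        ((hasDerivAt_const u (Real.sqrt 5)).sub
          (by simpa using hasDerivAt_pow 2 u))).div_const 4)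
    convert this using 1; ring
  have h := ((hp.mul (hasDerivAt_rrt u)).add
      ((hasDerivAt_lg u).const_mul (15/2))).div_const (Real.sqrt 15)
  refine h.congr_deriv ?_
  have hr := (rrt_pos u).ne'
  have hr2 := rrt_sq u
  have h5 : Real.sqrt 5 * Real.sqrt 5 = 5 := Real.mul_self_sqrt (by norm_num)
  have h15 : Real.sqrt 15 ≠ 0 := by positivity
  field_simp
  ring_nf
  linear_combination (Real.sqrt 15 * rrt u * (24*Real.sqrt 5 - 8*u^2)) * hr2 + (48*Real.sqrt 15 * rrt u) * h5
    + (-6*Real.sqrt 5 + -24*rrt u*Real.sqrt 15*Real.sqrt 5 + 2*u^2 + 8*rrt u*Real.sqrt 15*u^2) * hr2 + (-12 + -48*rrt u*Real.sqrt 15) * h5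

lemma hasDerivAt_F2 (u : ℝ) :
    HasDerivAt F2 (u^4 * (Real.sqrt 5 - u^2) * rrt u / Real.sqrt 15) u := by
  have hp : HasDerivAt (fun x : ℝ => -x^7/8 + Real.sqrt 5 * x^5/8 + 15*x^3/16 - 45*Real.sqrt 5*x/16)
      (-7*u^6/8 + 5*Real.sqrt 5 * u^4/8 + 45*u^2/16 - 45*Real.sqrt 5/16) u := by
    have h7 : HasDerivAt (fun x : ℝ => x^7) (7*u^6) u := by simpa using hasDerivAt_pow 7 u
    have h5' : HasDerivAt (fun x : ℝ => x^5) (5*u^4) u := by simpa using hasDerivAt_pow 5 u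
    have h3 : HasDerivAt (fun x : ℝ => x^3) (3*u^2) u := by simpa using hasDerivAt_pow 3 u
    have := (((h7.neg.div_const 8).add ((h5'.const_mul (Real.sqrt 5)).div_const 8)).add
      ((h3.const_mul 15).div_const 16)).sub ((hasDerivAt_id u).const_mul (45*Real.sqrt 5) |>.div_const 16)
    exact this.congr_deriv (by ring)
  have h := ((hp.mul (hasDerivAt_rrt u)).add
      ((hasDerivAt_lg u).const_mul (225/8))).div_const (Real.sqrt 15)
  refine h.congr_deriv ?_
  have hr := (rrt_pos u).ne'
  have hr2 := rrt_sq u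
  have h5 : Real.sqrt 5 * Real.sqrt 5 = 5 := Real.mul_self_sqrt (by norm_num)
  have h15 : Real.sqrt 15 ≠ 0 := by positivity
  field_simp
  ring_nf
  linear_combination (2147483648 * Real.sqrt 15 * rrt u) *
    ((((3:ℝ)/8*Real.sqrt 5*u^4 - u^6/8 - 45/16*u^2 + 45/16*Real.sqrt 5) * hr2)
      + (((3:ℝ)/4*u^4 + 45/8) * h5))
    + (360*u^2 + 6039797760*rrt u*Real.sqrt 15*u^2 + -48*Real.sqrt 5*u^4 + -805306368*rrt u*Real.sqrt 15*Real.sqrt 5*u^4 + 16*u^6 + 268435456*rrt u*Real.sqrt 15*u^6 + -360*Real.sqrt 5 + -6039797760*rrt u*Real.sqrt 15*Real.sqrt 5) * hr2 + (-96*u^4 + -1610612736*rrt u*Real.sqrt 15*u^4 + -720 + -12079595520*rrt u*Real.sqrt 15) * h5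

lemma integrand_eq (u : ℝ) (h : u^2 ≤ Real.sqrt 5) :
    Real.sqrt (-u^2 + u^6/15 + 2*Real.sqrt 5/3)
      = (Real.sqrt 5 - u^2) * rrt u / Real.sqrt 15 := by
  have hr2 := rrt_sq u
  have h5 : Real.sqrt 5 * Real.sqrt 5 = 5 := Real.mul_self_sqrt (by norm_num)
  have h152 : Real.sqrt 15 ^ 2 = 15 := Real.sq_sqrt (by norm_num)
  have h15 : (0:ℝ) < Real.sqrt 15 := by positivity
  have hnn : 0 ≤ (Real.sqrt 5 - u^2) * rrt u / Real.sqrt 15 := by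
    apply div_nonneg _ h15.le
    exact mul_nonneg (by linarith) (rrt_pos u).le
  rw [show -u^2 + u^6/15 + 2*Real.sqrt 5/3
      = ((Real.sqrt 5 - u^2) * rrt u / Real.sqrt 15)^2 from ?_, Real.sqrt_sq hnn]
  rw [div_pow, mul_pow, hr2, h152]
  have h5' : Real.sqrt 5 ^ 2 = 5 := by rw [sq]; exact h5
  field_simp
  linear_combination (9*u^2 - 6*Real.sqrt 5) * h5'

lemma log_two_sub_sqrt3 : Real.log (2 - Real.sqrt 3) = Real.log 2 - 2*Real.log (1 + Real.sqrt 3) := by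
  have h3 : Real.sqrt 3 * Real.sqrt 3 = 3 := Real.mul_self_sqrt (by norm_num)
  have h3p : (0:ℝ) < Real.sqrt 3 := by positivity
  have key : (2:ℝ) - Real.sqrt 3 = 2 / (1 + Real.sqrt 3)^2 := by
    rw [eq_div_iff (by positivity)]
    linear_combination (-Real.sqrt 3) * h3
  rw [key, Real.log_div (by norm_num) (by positivity), Real.log_pow]
  push_cast; ring

lemma log_rrt_zero : Real.log (0 + rrt 0) = Real.log 2 / 2 + Real.log 5 / 4 := by
  have : rrt 0 = Real.sqrt (2 * Real.sqrt 5) := by unfold rrt; norm_num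
  rw [zero_add, this, Real.log_sqrt (by positivity),
    Real.log_mul (by norm_num) (by positivity), Real.log_sqrt (by norm_num)]
  ring

section endpoints
variable {a : ℝ} (ha : 0 < a) (ha2 : a^2 = Real.sqrt 5)

include ha ha2

lemma rrt_a : rrt a = Real.sqrt 3 * a := by
  have : a^2 + 2*Real.sqrt 5 = 3 * a^2 := by rw [ha2]; ring
  unfold rrt
  rw [this, show (3:ℝ)*a^2 = 3*a^2 from rfl, Real.sqrt_mul (by norm_num), Real.sqrt_sq ha.le]

lemma log_rrt_a : Real.log (a + rrt a) = Real.log a + Real.log (1 + Real.sqrt 3) := by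
  rw [rrt_a ha ha2, show a + Real.sqrt 3 * a = a * (1 + Real.sqrt 3) by ring,
    Real.log_mul ha.ne' (by positivity)]

end endpoints

/-- The definite integrals for the case `n = 4` at the heteroclinic
level: `∫₀^{5^(1/4)} √(-u² + u⁶/15 + 2√5/3) du = -(√15/4) ln(2 - √3)` and
`∫₀^{5^(1/4)} u⁴ √(-u² + u⁶/15 + 2√5/3) du
  = -(15√5/16)(2 + √3 ln 2 - 2√3 ln(1 + √3))`. -/
theorem integrals_n_four :
    (∫ u in (0 : ℝ)..(5 : ℝ) ^ ((1 : ℝ) / 4),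
        Real.sqrt (-u ^ 2 + u ^ 6 / 15 + 2 * Real.sqrt 5 / 3)) =
      -(Real.sqrt 15 / 4) * Real.log (2 - Real.sqrt 3) ∧
    (∫ u in (0 : ℝ)..(5 : ℝ) ^ ((1 : ℝ) / 4),
        u ^ 4 * Real.sqrt (-u ^ 2 + u ^ 6 / 15 + 2 * Real.sqrt 5 / 3)) =
      -(15 * Real.sqrt 5 / 16) *
        (2 + Real.sqrt 3 * Real.log 2 - 2 * Real.sqrt 3 * Real.log (1 + Real.sqrt 3)) := by
  set a : ℝ := (5 : ℝ) ^ ((1 : ℝ) / 4) with ha_def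
  have ha : 0 < a := Real.rpow_pos_of_pos (by norm_num) _
  have ha2 : a ^ 2 = Real.sqrt 5 := by
    rw [Real.sqrt_eq_rpow, ha_def, ← Real.rpow_natCast ((5:ℝ) ^ ((1:ℝ)/4)) 2,
      ← Real.rpow_mul (by norm_num : (0:ℝ) ≤ 5)]
    norm_num
  have hloga : Real.log a = Real.log 5 / 4 := by
    rw [ha_def, Real.log_rpow (by norm_num)]; ring
  have hxle : ∀ x ∈ Set.uIcc (0:ℝ) a, x ^ 2 ≤ Real.sqrt 5 := by
    intro x hx
    rw [Set.uIcc_of_le ha.le] at hx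
    calc x^2 ≤ a^2 := by nlinarith [hx.1, hx.2]
    _ = Real.sqrt 5 := ha2
  have hc : Continuous (fun u : ℝ => Real.sqrt (-u ^ 2 + u ^ 6 / 15 + 2 * Real.sqrt 5 / 3)) := by
    fun_prop
  have key1 : (∫ u in (0:ℝ)..a, Real.sqrt (-u ^ 2 + u ^ 6 / 15 + 2 * Real.sqrt 5 / 3))
      = F1 a - F1 0 := by
    apply intervalIntegral.integral_eq_sub_of_hasDerivAt
    · intro x hx
      rw [integrand_eq x (hxle x hx)]
      exact hasDerivAt_F1 x
    · exact hc.intervalIntegrable 0 a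
  have key2 : (∫ u in (0:ℝ)..a, u ^ 4 * Real.sqrt (-u ^ 2 + u ^ 6 / 15 + 2 * Real.sqrt 5 / 3))
      = F2 a - F2 0 := by
    apply intervalIntegral.integral_eq_sub_of_hasDerivAt
    · intro x hx
      rw [integrand_eq x (hxle x hx)]
      have := hasDerivAt_F2 x
      refine this.congr_deriv ?_
      ring
    · exact ((continuous_pow 4).mul hc).intervalIntegrable 0 a
  have h3 : Real.sqrt 3 * Real.sqrt 3 = 3 := Real.mul_self_sqrt (by norm_num)
  have h5 : Real.sqrt 5 * Real.sqrt 5 = 5 := Real.mul_self_sqrt (by norm_num)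
  have h15 : Real.sqrt 15 * Real.sqrt 15 = 15 := Real.mul_self_sqrt (by norm_num)
  have h35 : Real.sqrt 3 * Real.sqrt 5 = Real.sqrt 15 := by
    rw [← Real.sqrt_mul (by norm_num)]; norm_num
  have h15p : (0:ℝ) < Real.sqrt 15 := by positivity
  constructor
  · rw [key1]
    unfold F1
    rw [log_rrt_a ha ha2, log_rrt_zero, rrt_a ha ha2, hloga, log_two_sub_sqrt3, ha2]
    field_simp
    ring_nf
    linear_combination (4*Real.log 2 - 8*Real.log (1+Real.sqrt 3)) * h15
  · rw [key2]
    unfold F2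
    have ha4 : a^4 = 5 := by
      rw [show a^4 = (a^2)^2 by ring, ha2, sq]; exact h5
    have ha6 : a^6 = 5*Real.sqrt 5 := by
      rw [show a^6 = (a^2)^3 by ring, ha2, show (Real.sqrt 5)^3 = (Real.sqrt 5*Real.sqrt 5)*Real.sqrt 5 by ring, h5]
    have ha8 : a^8 = 25 := by
      rw [show a^8 = (a^2)^4 by ring, ha2, show (Real.sqrt 5)^4 = (Real.sqrt 5*Real.sqrt 5)^2 by ring, h5]
      norm_num
    rw [log_rrt_a ha ha2, log_rrt_zero, rrt_a ha ha2, hloga]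
    field_simp
    ring_nf
    linear_combination (67108864:ℝ) * (
      ((-45/2)*Real.sqrt 5*Real.sqrt 3*Real.sqrt 15) * ha2
      + ((15/2)*Real.sqrt 3*Real.sqrt 15) * ha4
      + (Real.sqrt 5*Real.sqrt 3*Real.sqrt 15) * ha6
      + (-Real.sqrt 3*Real.sqrt 15) * ha8
      + ((-35/2)*Real.sqrt 3*Real.sqrt 15) * h5
      + ((-15)*Real.sqrt 5*Real.sqrt 3*Real.log (1+Real.sqrt 3)
          + (15/2)*Real.sqrt 5*Real.sqrt 3*Real.log 2
          + 15*Real.sqrt 5) * h15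
      + ((-225)*Real.log (1+Real.sqrt 3) + (225/2)*Real.log 2 + 75*Real.sqrt 3) * h35
      + ((-75)*Real.sqrt 5) * h3)
      + (-128*Real.sqrt 3 + 67108864*Real.sqrt 3^2*Real.sqrt 5) * ha8 + (128*Real.sqrt 3*Real.sqrt 5 + -67108864*Real.sqrt 3^2*Real.sqrt 5^2) * ha6 + (960*Real.sqrt 3 + -503316480*Real.sqrt 3^2*Real.sqrt 5) * ha4 + (-2880*Real.sqrt 3*Real.sqrt 5 + 1509949440*Real.sqrt 3^2*Real.sqrt 5^2) * ha2 + (-1920*Real.log (1+Real.sqrt 3)*Real.sqrt 3^2 + 960*Real.log 2*Real.sqrt 3^2 + -320*Real.sqrt 3 + 1006632960*Real.log (1+Real.sqrt 3)*Real.sqrt 3^3*Real.sqrt 5 + -503316480*Real.log 2*Real.sqrt 3^3*Real.sqrt 5 + 167772160*Real.sqrt 3^2*Real.sqrt 5) * h5 + (-9600*Real.log (1+Real.sqrt 3) + 4800*Real.log 2 + 5033164800*Real.log (1+Real.sqrt 3)*Real.sqrt 3*Real.sqrt 5 + -2516582400*Real.log 2*Real.sqrt 3*Real.sqrt 5) *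 h3 + (-1509949440*a^2*Real.sqrt 3*Real.sqrt 5 + 503316480*a^4*Real.sqrt 3 + 67108864*a^6*Real.sqrt 3*Real.sqrt 5 + -67108864*a^8*Real.sqrt 3 + 1920*Real.log (1+Real.sqrt 3)*Real.sqrt 3*Real.sqrt 5 + -1006632960*Real.log (1+Real.sqrt 3)*Real.sqrt 15*Real.sqrt 3*Real.sqrt 5 + -960*Real.log 2*Real.sqrt 3*Real.sqrt 5 + 503316480*Real.log 2*Real.sqrt 15*Real.sqrt 3*Real.sqrt 5 + -1920*Real.sqrt 5 + 1006632960*Real.sqrt 15*Real.sqrt 5 + 15099494400*Real.log (1+Real.sqrt 3) + -7549747200*Real.log 2 + -1006632960*Real.log (1+Real.sqrt 3)*Real.sqrt 3^2*Real.sqrt 5^2 + 503316480*Real.log 2*Real.sqrt 3^2*Real.sqrt 5^2 + 1006632960*Real.sqrt 3*Real.sqrt 5^2) * h35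
end

section
/- Let W(u) = u²/2 - u⁶/30 and for h ∈ (0, √5/3) let α(h) ∈ (0, 5^{1/4}) be the unique root of W(u) = h in (0, 5^{1/4}), and define B̃₄(h) = (∫_{-α(h)}^{α(h)} u⁴ √(2(h - W(u))) du)/(∫_{-α(h)}^{α(h)} √(2(h - W(u))) du). Then B̃₄(h) → 5(2√3 + ln(26 - 15√3)) / (4 ln(2 - √3)) as h → (√5/3)⁻. -/
open Real intervalIntegral

lemma sq2_pos (t : ℝ) : (0:ℝ) < t^2 + 2 := by positivity

lemma sqrt_sq2_pos (t : ℝ) : 0 < Real.sqrt (t^2+2) := Real.sqrt_pos.2 (sq2_pos t)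

lemma add_sqrt_pos (t : ℝ) : 0 < t + Real.sqrt (t^2+2) := by
  have h : |t| < Real.sqrt (t^2+2) := by
    rw [← Real.sqrt_sq_eq_abs]
    exact Real.sqrt_lt_sqrt (sq_nonneg t) (by linarith)
  have := abs_lt.1 h
  linarith [this.1]

lemma hasDerivAt_sqrt2 (t : ℝ) :
    HasDerivAt (fun x : ℝ => Real.sqrt (x^2+2)) (t / Real.sqrt (t^2+2)) t := by
  have h1 : HasDerivAt (fun x : ℝ => x^2+2) (2*t) t := by
    simpa using ((hasDerivAt_pow 2 t).add_const 2)
  have h2 := (Real.hasDerivAt_sqrt (ne_of_gt (sq2_pos t))).comp t h1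
  convert h2 using 1
  · rfl
  · rfl
  · rfl
  field_simp

lemma hasDerivAt_logsqrt (t : ℝ) :
    HasDerivAt (fun x : ℝ => Real.log (x + Real.sqrt (x^2+2)))
      (1 / Real.sqrt (t^2+2)) t := by
  have h1 : HasDerivAt (fun x : ℝ => x + Real.sqrt (x^2+2))
      (1 + t / Real.sqrt (t^2+2)) t := (hasDerivAt_id t).add (hasDerivAt_sqrt2 t)
  have h2 := (Real.hasDerivAt_log (ne_of_gt (add_sqrt_pos t))).comp t h1
  convert h2 using 1
  · rfl
  · rfl
  · rfl
  have hs := sqrt_sq2_pos t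
  have hts := add_sqrt_pos t
  field_simp
  ring

lemma hasDerivAt_comb (Q : ℝ → ℝ) (Q' c t : ℝ) (hQ : HasDerivAt Q Q' t) :
    HasDerivAt (fun x : ℝ => Q x * Real.sqrt (x^2+2) + c * Real.log (x + Real.sqrt (x^2+2)))
      ((Q' * (t^2+2) + Q t * t + c) / Real.sqrt (t^2+2)) t := by
  have h := (hQ.mul (hasDerivAt_sqrt2 t)).add ((hasDerivAt_logsqrt t).const_mul c)
  convert h using 1
  · rfl
  · rfl
  · rfl
  have hs := sqrt_sq2_pos t
  have hsq : Real.sqrt (t^2+2) ^ 2 = t^2 + 2 := Real.sq_sqrt (le_of_lt (sq2_pos t))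
  field_simp
  linear_combination -Q' * hsq

lemma sqrt3_lt_two : Real.sqrt 3 < 2 := by
  have : Real.sqrt 3 < Real.sqrt 4 := Real.sqrt_lt_sqrt (by norm_num) (by norm_num)
  simpa [show Real.sqrt 4 = 2 by
    rw [show (4:ℝ) = 2^2 by norm_num, Real.sqrt_sq]; norm_num] using this

lemma one_lt_sqrt3 : 1 < Real.sqrt 3 := by
  have : Real.sqrt 1 < Real.sqrt 3 := Real.sqrt_lt_sqrt (by norm_num) (by norm_num)
  simpa using this

lemma log_diff : Real.log (1 + Real.sqrt 3) - Real.log (-1 + Real.sqrt 3)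
    = Real.log (2 + Real.sqrt 3) := by
  have h3 : Real.sqrt 3 ^ 2 = 3 := Real.sq_sqrt (by norm_num)
  have h1 : (1:ℝ) + Real.sqrt 3 = (2 + Real.sqrt 3) * (-1 + Real.sqrt 3) := by
    nlinarith [h3]
  rw [h1, Real.log_mul (by positivity) (by nlinarith [one_lt_sqrt3])]
  ring

lemma K0_val : (∫ t in (-1:ℝ)..1, (1 - t^2) * Real.sqrt (t^2+2))
    = 3/2 * Real.log (2 + Real.sqrt 3) := by
  have hF : ∀ t ∈ Set.uIcc (-1:ℝ) 1,
      HasDerivAt (fun x : ℝ => (x/4 - x^3/4) * Real.sqrt (x^2+2)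
        + 3/2 * Real.log (x + Real.sqrt (x^2+2)))
      ((1 - t^2) * Real.sqrt (t^2+2)) t := by
    intro t _
    have hQ : HasDerivAt (fun x : ℝ => x/4 - x^3/4) (1/4 - 3*t^2/4) t := by
      have h1 := (hasDerivAt_pow 1 t).div_const 4
      have h2 := (hasDerivAt_pow 3 t).div_const 4
      convert h1.sub h2 using 1
      · rfl
      · rfl
      · funext x; simp only [Pi.sub_apply, Pi.add_apply, Pi.neg_apply]; ring
      · push_cast; ring
    have h := hasDerivAt_comb (fun x : ℝ => x/4 - x^3/4) (1/4 - 3*t^2/4) (3/2) t hQ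
    convert h using 1
    have hs := sqrt_sq2_pos t
    have hsq : Real.sqrt (t^2+2) ^ 2 = t^2 + 2 := Real.sq_sqrt (le_of_lt (sq2_pos t))
    rw [eq_div_iff hs.ne']
    linear_combination (1 - t^2) * hsq
  have hint : IntervalIntegrable (fun t : ℝ => (1 - t^2) * Real.sqrt (t^2+2))
      MeasureTheory.volume (-1) 1 := by
    apply Continuous.intervalIntegrable; fun_prop
  rw [intervalIntegral.integral_eq_sub_of_hasDerivAt hF hint]
  rw [show ((1:ℝ)^2+2) = 3 by norm_num, show (((-1):ℝ)^2+2) = 3 by norm_num]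
  have := log_diff
  ring_nf
  ring_nf at this
  linarith [this]

lemma K4_val : (∫ t in (-1:ℝ)..1, t^4 * ((1 - t^2) * Real.sqrt (t^2+2)))
    = -(3/4) * Real.sqrt 3 + 9/8 * Real.log (2 + Real.sqrt 3) := by
  have hF : ∀ t ∈ Set.uIcc (-1:ℝ) 1,
      HasDerivAt (fun x : ℝ => (-x^7/8 + x^5/8 + 3*x^3/16 - 9*x/16) * Real.sqrt (x^2+2)
        + 9/8 * Real.log (x + Real.sqrt (x^2+2)))
      (t^4 * ((1 - t^2) * Real.sqrt (t^2+2))) t := by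
    intro t _
    have hQ : HasDerivAt (fun x : ℝ => -x^7/8 + x^5/8 + 3*x^3/16 - 9*x/16)
        (-7*t^6/8 + 5*t^4/8 + 9*t^2/16 - 9/16) t := by
      have h7 := ((hasDerivAt_pow 7 t).div_const 8).neg
      have h5 := (hasDerivAt_pow 5 t).div_const 8
      have h3 := ((hasDerivAt_pow 3 t).const_mul (3:ℝ)).div_const 16
      have h1 := ((hasDerivAt_pow 1 t).const_mul (9:ℝ)).div_const 16
      convert ((h7.add h5).add h3).sub h1 using 1
      · rfl
      · rfl
      · funext x; simp only [Pi.sub_apply, Pi.add_apply, Pi.neg_apply]; ring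
      · push_cast; ring
    have h := hasDerivAt_comb _ _ (9/8) t hQ
    convert h using 1
    have hs := sqrt_sq2_pos t
    have hsq : Real.sqrt (t^2+2) ^ 2 = t^2 + 2 := Real.sq_sqrt (le_of_lt (sq2_pos t))
    rw [eq_div_iff hs.ne']
    linear_combination (t^4 - t^6) * hsq
  have hint : IntervalIntegrable (fun t : ℝ => t^4 * ((1 - t^2) * Real.sqrt (t^2+2)))
      MeasureTheory.volume (-1) 1 := by
    apply Continuous.intervalIntegrable; fun_prop
  rw [intervalIntegral.integral_eq_sub_of_hasDerivAt hF hint]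
  rw [show ((1:ℝ)^2+2) = 3 by norm_num, show (((-1):ℝ)^2+2) = 3 by norm_num]
  have := log_diff
  ring_nf
  ring_nf at this
  linarith [this]

noncomputable def qc : ℝ := (5:ℝ) ^ ((1:ℝ)/4)

lemma qc_pos : 0 < qc := Real.rpow_pos_of_pos (by norm_num) _

lemma qc_sq : qc ^ 2 = Real.sqrt 5 := by
  rw [qc, ← Real.rpow_natCast ((5:ℝ) ^ ((1:ℝ)/4)) 2, ← Real.rpow_mul (by norm_num)]
  rw [Real.sqrt_eq_rpow]
  norm_num

lemma qc_pow4 : qc ^ 4 = 5 := by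
  rw [qc, ← Real.rpow_natCast ((5:ℝ) ^ ((1:ℝ)/4)) 4, ← Real.rpow_mul (by norm_num)]
  norm_num

lemma qc_pow6 : qc ^ 6 = 5 * Real.sqrt 5 := by
  have : qc ^ 6 = qc ^ 4 * qc ^ 2 := by ring
  rw [this, qc_pow4, qc_sq]

noncomputable def gg (a t : ℝ) : ℝ :=
  Real.sqrt (a^2 * (1 - t^2) - a^6 * (1 - t^6) / 15)

lemma gg_cont : Continuous (Function.uncurry gg) := by
  apply Real.continuous_sqrt.comp
  fun_prop

noncomputable def II (k : ℕ) (a : ℝ) : ℝ := ∫ t in (-1:ℝ)..1, t^k * gg a t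

lemma II_cont (k : ℕ) : Continuous (II k) := by
  apply intervalIntegral.continuous_parametric_intervalIntegral_of_continuous'
  have : Continuous fun p : ℝ × ℝ => (p.2 : ℝ)^k := by fun_prop
  exact this.mul gg_cont

lemma gg_at_qc (t : ℝ) (ht : t ∈ Set.uIcc (-1:ℝ) 1) :
    gg qc t = Real.sqrt (Real.sqrt 5 / 3) * ((1 - t^2) * Real.sqrt (t^2+2)) := by
  have ht' : t^2 ≤ 1 := by
    rw [Set.uIcc_of_le (by norm_num)] at ht
    nlinarith [ht.1, ht.2]
  have h5 : (0:ℝ) ≤ Real.sqrt 5 := Real.sqrt_nonneg 5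
  have key : qc^2 * (1 - t^2) - qc^6 * (1 - t^6) / 15
      = (Real.sqrt 5 / 3) * ((1 - t^2)^2 * (t^2+2)) := by
    rw [qc_sq, qc_pow6]; ring
  rw [gg, key, Real.sqrt_mul (by positivity), Real.sqrt_mul (by positivity),
    Real.sqrt_sq (by nlinarith)]

lemma II0_at_qc : II 0 qc = Real.sqrt (Real.sqrt 5 / 3) * (3/2 * Real.log (2 + Real.sqrt 3)) := by
  rw [II, ← K0_val, ← intervalIntegral.integral_const_mul]
  apply intervalIntegral.integral_congr
  intro t ht
  simp only []
  rw [pow_zero, one_mul, gg_at_qc t ht]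

lemma II4_at_qc : II 4 qc = Real.sqrt (Real.sqrt 5 / 3)
    * (-(3/4) * Real.sqrt 3 + 9/8 * Real.log (2 + Real.sqrt 3)) := by
  rw [II, ← K4_val, ← intervalIntegral.integral_const_mul]
  apply intervalIntegral.integral_congr
  intro t ht
  simp only []
  rw [gg_at_qc t ht]; ring

lemma logM_pos : 0 < Real.log (2 + Real.sqrt 3) :=
  Real.log_pos (by linarith [Real.sqrt_nonneg 3])

lemma II0_qc_pos : 0 < II 0 qc := by
  rw [II0_at_qc]
  have h1 : 0 < Real.sqrt (Real.sqrt 5 / 3) := Real.sqrt_pos.2 (by positivity)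
  nlinarith [logM_pos]

lemma log_two_sub : Real.log (2 - Real.sqrt 3) = - Real.log (2 + Real.sqrt 3) := by
  have h3 : Real.sqrt 3 ^ 2 = 3 := Real.sq_sqrt (by norm_num)
  have h : (2 - Real.sqrt 3) * (2 + Real.sqrt 3) = 1 := by nlinarith
  rw [eq_inv_of_mul_eq_one_left h, Real.log_inv]

lemma log_26 : Real.log (26 - 15 * Real.sqrt 3) = 3 * Real.log (2 - Real.sqrt 3) := by
  have h3 : Real.sqrt 3 ^ 2 = 3 := Real.sq_sqrt (by norm_num)
  have h : (26:ℝ) - 15 * Real.sqrt 3 = (2 - Real.sqrt 3)^3 := by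
    linear_combination (Real.sqrt 3 - 6) * h3
  rw [h, Real.log_pow]
  push_cast; ring

lemma target_val :
    5 * (2 * Real.sqrt 3 + Real.log (26 - 15 * Real.sqrt 3)) /
      (4 * Real.log (2 - Real.sqrt 3))
    = qc ^ 4 * II 4 qc / II 0 qc := by
  have hc : (0:ℝ) < Real.sqrt (Real.sqrt 5 / 3) := Real.sqrt_pos.2 (by positivity)
  rw [qc_pow4, II4_at_qc, II0_at_qc, log_26, log_two_sub]
  set M := Real.log (2 + Real.sqrt 3) with hM
  have hM0 : M ≠ 0 := ne_of_gt logM_pos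
  field_simp
  ring


/-- For `n = 4` (`W(u) = u²/2 - u⁶/30`), the ratio of Abelian
integrals `B̃₄(h)` tends to `5(2√3 + ln(26 - 15√3)) / (4 ln(2 - √3))` as
`h → (√5/3)⁻`. -/
theorem B4_limit_at_saddle (W : ℝ → ℝ)
    (hW : ∀ u : ℝ, W u = u ^ 2 / 2 - u ^ 6 / 30)
    (α : ℝ → ℝ)
    (hα : ∀ h ∈ Set.Ioo (0 : ℝ) (Real.sqrt 5 / 3),
      α h ∈ Set.Ioo 0 ((5 : ℝ) ^ ((1 : ℝ) / 4)) ∧ W (α h) = h)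
    (B : ℝ → ℝ)
    (hB : ∀ h : ℝ, B h =
      (∫ u in (-α h)..(α h), u ^ 4 * Real.sqrt (2 * (h - W u))) /
      (∫ u in (-α h)..(α h), Real.sqrt (2 * (h - W u)))) :
    Filter.Tendsto B
      (nhdsWithin (Real.sqrt 5 / 3) (Set.Iio (Real.sqrt 5 / 3)))
      (nhds (5 * (2 * Real.sqrt 3 + Real.log (26 - 15 * Real.sqrt 3)) /
        (4 * Real.log (2 - Real.sqrt 3)))) := by
  set d : ℝ := Real.sqrt 5 / 3 with hd_def
  have hd : 0 < d := by
    have : 0 < Real.sqrt 5 := Real.sqrt_pos.2 (by norm_num)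
    positivity
  have hq : ∀ h ∈ Set.Ioo (0:ℝ) d, α h ∈ Set.Ioo 0 qc ∧ W (α h) = h := hα
  -- W is strictly monotone on [0, qc]
  have hWfun : W = fun u : ℝ => u ^ 2 / 2 - u ^ 6 / 30 := funext hW
  have hmono : StrictMonoOn W (Set.Icc 0 qc) := by
    apply strictMonoOn_of_deriv_pos (convex_Icc _ _)
    · rw [hWfun]; fun_prop
    · intro x hx
      rw [interior_Icc] at hx
      have hDer : HasDerivAt W (x - x^5/5) x := by
        rw [hWfun]
        have h2 := (hasDerivAt_pow 2 x).div_const 2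
        have h6 := (hasDerivAt_pow 6 x).div_const 30
        convert h2.sub h6 using 1
        · rfl
        · rfl
        · rfl
        push_cast; ring
      rw [hDer.deriv]
      have hx4 : x^4 < 5 := by
        calc x^4 < qc^4 := by
              apply pow_lt_pow_left₀ hx.2 hx.1.le
              · norm_num
          _ = 5 := qc_pow4
      nlinarith [hx.1]
  have hWqc : W qc = d := by
    rw [hW, qc_sq]
    have h6 : qc ^ 6 = 5 * Real.sqrt 5 := qc_pow6
    rw [h6]; ring
  -- α tends to qc
  have htα : Filter.Tendsto α (nhdsWithin d (Set.Iio d)) (nhds qc) := by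
    rw [tendsto_order]
    constructor
    · intro b hb
      rcases le_or_gt b 0 with hb0 | hb0
      · filter_upwards [Ioo_mem_nhdsLT_of_mem (Set.mem_Ioc.2 ⟨hd, le_refl d⟩)] with h hh
        exact lt_of_le_of_lt hb0 (hq h hh).1.1
      · have hbq : b ∈ Set.Icc (0:ℝ) qc := ⟨hb0.le, hb.le⟩
        have hWb : W b < d := by
          rw [← hWqc]
          exact hmono hbq (Set.mem_Icc.2 ⟨qc_pos.le, le_refl qc⟩) hb
        filter_upwards [Ioo_mem_nhdsLT_of_mem (Set.mem_Ioc.2 ⟨hWb, le_refl d⟩),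
          Ioo_mem_nhdsLT_of_mem (Set.mem_Ioc.2 ⟨hd, le_refl d⟩)] with h h1 h2
        obtain ⟨hαm, hWα⟩ := hq h h2
        by_contra hcon
        push_neg at hcon
        have : W (α h) ≤ W b :=
          hmono.monotoneOn ⟨hαm.1.le, hαm.2.le⟩ hbq hcon
        rw [hWα] at this
        exact absurd h1.1 (not_lt.2 this)
    · intro b hb
      filter_upwards [Ioo_mem_nhdsLT_of_mem (Set.mem_Ioc.2 ⟨hd, le_refl d⟩)] with h hh
      exact lt_trans (hq h hh).1.2 hb
  -- eventual equality of B with the rescaled ratio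
  have heq : ∀ᶠ h in nhdsWithin d (Set.Iio d),
      B h = (α h)^4 * II 4 (α h) / II 0 (α h) := by
    filter_upwards [Ioo_mem_nhdsLT_of_mem (Set.mem_Ioc.2 ⟨hd, le_refl d⟩)] with h hh
    obtain ⟨hαm, hWα⟩ := hq h hh
    set a := α h with ha_def
    have ha0 : 0 < a := hαm.1
    have hgg : ∀ t : ℝ, Real.sqrt (2*(h - W (a*t))) = gg a t := by
      intro t
      rw [gg]; congr 1
      rw [hW (a*t), ← hWα, hW a]; ring
    have e4 : (∫ u in (-a)..a, u ^ 4 * Real.sqrt (2 * (h - W u)))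
        = a * (a^4 * II 4 a) := by
      have hs := intervalIntegral.smul_integral_comp_mul_left
        (fun u : ℝ => u ^ 4 * Real.sqrt (2 * (h - W u))) a (a := -1) (b := 1)
      simp only [smul_eq_mul, mul_neg, mul_one] at hs
      rw [show -a = a * -1 by ring] at hs ⊢
      rw [← hs]
      congr 1
      rw [II, ← intervalIntegral.integral_const_mul]
      apply intervalIntegral.integral_congr
      intro t _
      simp only []
      rw [hgg t, mul_pow]
      ring
    have e0 : (∫ u in (-a)..a, Real.sqrt (2 * (h - W u))) = a * II 0 a := by
      have hs := intervalIntegral.smul_integral_comp_mul_left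
        (fun u : ℝ => Real.sqrt (2 * (h - W u))) a (a := -1) (b := 1)
      simp only [smul_eq_mul, mul_neg, mul_one] at hs
      rw [← hs]
      congr 1
      rw [II]
      apply intervalIntegral.integral_congr
      intro t _
      simp only []
      rw [hgg t, pow_zero, one_mul]
    rw [hB h, e4, e0, mul_div_mul_left _ _ (ne_of_gt ha0)]
  -- limit of the rescaled ratio
  have hcont : Filter.Tendsto (fun a : ℝ => a^4 * II 4 a / II 0 a) (nhds qc)
      (nhds (qc^4 * II 4 qc / II 0 qc)) := by
    apply Filter.Tendsto.div
    · exact ((continuous_pow 4).tendsto qc).mul ((II_cont 4).tendsto qc)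
    · exact (II_cont 0).tendsto qc
    · exact ne_of_gt II0_qc_pos
  rw [target_val]
  exact Filter.Tendsto.congr' (heq.mono fun x hx => hx.symm) (hcont.comp htα)
end
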